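/- arXiv:0805.2907 — 6 statements merged into one kernel-verified Lean document; each statement's English description precedes it below -/
import Mathlib

section
/- If X is a finite list of nonzero vectors in a lattice Γ generating a pointed cone and spanning V = Γ ⊗ ℝ, then the partition function P_X satisfies the difference equation ∇_X P_X = δ₀, where ∇_X is the product of the operators ∇_a over a ∈ X and δ₀ is the function equal to 1 at 0 and 0 elsewhere. -/
open Function

attribute [local instance] Classical.propDecidable

noncomputable section

/-- The lattice `Γ = ι → ℤ`. -/
abbrev ZLat (ι : Type*) := ι → ℤ
/-- The ambient real vector space `V = Γ ⊗ ℝ = ι → ℝ`. -/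
abbrev Amb (ι : Type*) := ι → ℝ

variable {ι : Type*} [Fintype ι]

/-- Embedding of the lattice into the ambient space. -/
def castV (γ : ZLat ι) : Amb ι := fun i => (γ i : ℝ)

/-- Standard pairing on `V`. -/
def dotR (u v : Amb ι) : ℝ := ∑ i, u i * v i

/-- The difference operator `∇ₐ`. -/
def nab (a : ZLat ι) (f : ZLat ι → ℤ) : ZLat ι → ℤ := fun b => f b - f (b - a)

/-- `∇_Y = ∏_{a ∈ Y} ∇ₐ` for a list `Y`. -/
def nabL (Y : List (ZLat ι)) (f : ZLat ι → ℤ) : ZLat ι → ℤ := Y.foldr nab f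

/-- Delta function at `0`. -/
def delta0 : ZLat ι → ℤ := fun γ => if γ = 0 then 1 else 0

/-- The partition function of a list `Y`: the number of ways of writing `γ` as a
nonnegative integral combination of the entries of `Y`. -/
def partFn (Y : List (ZLat ι)) : ZLat ι → ℤ :=
  fun γ => Nat.card {k : Fin Y.length → ℕ // ∑ i, (k i : ℤ) • Y.get i = γ}

/-- The cone `C(Y)` of nonnegative real combinations of the entries of `Y`. -/
def coneC (Y : List (ZLat ι)) : Set (Amb ι) :=
  {v | ∃ t : Fin Y.length → ℝ, (∀ i, 0 ≤ t i) ∧ v = ∑ i, t i • castV (Y.get i)}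

/-- `C(Y)` is pointed: it contains no line. -/
def PointedList (Y : List (ZLat ι)) : Prop :=
  ∀ v ∈ coneC Y, -v ∈ coneC Y → v = 0

/-- The zonotope `B(Y) = {∑ tᵢ aᵢ : 0 ≤ tᵢ ≤ 1}`. -/
def zono (Y : List (ZLat ι)) : Set (Amb ι) :=
  {v | ∃ t : Fin Y.length → ℝ, (∀ i, 0 ≤ t i ∧ t i ≤ 1) ∧ v = ∑ i, t i • castV (Y.get i)}

/-- The real span of a list of lattice vectors. -/
def spanOf (Y : List (ZLat ι)) : Submodule ℝ (Amb ι) :=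
  Submodule.span ℝ (castV '' {a | a ∈ Y})

/-- A subspace is rational (relative to `X`) if it is spanned by a sublist of `X`. -/
def IsRational (X : List (ZLat ι)) (r : Submodule ℝ (Amb ι)) : Prop :=
  ∃ Y : List (ZLat ι), (∀ a ∈ Y, a ∈ X) ∧ r = spanOf Y

/-- The sublist `X ∩ r`. -/
def inSub (X : List (ZLat ι)) (r : Submodule ℝ (Amb ι)) : List (ZLat ι) :=
  X.filter (fun a => decide (castV a ∈ r))

/-- The sublist `X \ r`. -/
def outSub (X : List (ZLat ι)) (r : Submodule ℝ (Amb ι)) : List (ZLat ι) :=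
  X.filter (fun a => decide (castV a ∉ r))

/-- The operator `∇_{X \ r}`. -/
def nabOut (X : List (ZLat ι)) (r : Submodule ℝ (Amb ι)) (f : ZLat ι → ℤ) : ZLat ι → ℤ :=
  nabL (outSub X r) f

/-- The space `𝓕(X)`: `∇_{X\r} f` is supported on `Γ ∩ r` for every rational `r`. -/
def memF (X : List (ZLat ι)) (f : ZLat ι → ℤ) : Prop :=
  ∀ r, IsRational X r → support (nabOut X r f) ⊆ {γ | castV γ ∈ r}

/-- The Dahmen–Micchelli space of a list `Y` (inside its span): `f` is killed by
`∇_{Y \ H}` for every rational hyperplane `H` of the span of `Y`. -/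
def memDM (Y : List (ZLat ι)) (f : ZLat ι → ℤ) : Prop :=
  ∀ H, IsRational Y H → Module.finrank ℝ H + 1 = Module.finrank ℝ (spanOf Y) →
    nabOut Y H f = 0

/-- `𝓕(X ∩ r)`, viewed as functions on `Γ` supported on `Γ ∩ r`. -/
def memFrel (X : List (ZLat ι)) (r : Submodule ℝ (Amb ι)) (g : ZLat ι → ℤ) : Prop :=
  support g ⊆ {γ | castV γ ∈ r} ∧ memF (inSub X r) g

/-- `DM(X ∩ r)`, viewed as functions on `Γ` supported on `Γ ∩ r`. -/
def memDMrel (X : List (ZLat ι)) (r : Submodule ℝ (Amb ι)) (g : ZLat ι → ℤ) : Prop :=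
  support g ⊆ {γ | castV γ ∈ r} ∧ memDM (inSub X r) g

/-- `u` is a regular vector for `X \ r`:  `u ∈ r^⊥` and `⟨u, a⟩ ≠ 0` for all `a ∈ X \ r`.
It determines the regular face `F` containing it. -/
def Reg (X : List (ZLat ι)) (r : Submodule ℝ (Amb ι)) (u : Amb ι) : Prop :=
  (∀ v ∈ r, dotR u v = 0) ∧ ∀ a ∈ X, castV a ∉ r → dotR u (castV a) ≠ 0

/-- The sublist `B ⊆ X \ r` of elements negative on `u`. -/
def negPart (X : List (ZLat ι)) (r : Submodule ℝ (Amb ι)) (u : Amb ι) : List (ZLat ι) :=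
  (outSub X r).filter (fun a => decide (dotR u (castV a) < 0))

/-- The list `[A, -B]`: entries of `X \ r`, with sign flipped on the part negative on `u`. -/
def signedOut (X : List (ZLat ι)) (r : Submodule ℝ (Amb ι)) (u : Amb ι) : List (ZLat ι) :=
  (outSub X r).map (fun a => if 0 < dotR u (castV a) then a else -a)

/-- The special function `𝓟_{X\r}^F` for the face `F ∋ u`:
`(-1)^{|B|} τ_{-∑_{b∈B} b} (∏_{a∈A} ∑_k δ_{ka}) * (∏_{b∈B} ∑_k δ_{-kb})`. -/
def PF (X : List (ZLat ι)) (r : Submodule ℝ (Amb ι)) (u : Amb ι) : ZLat ι → ℤ :=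
  fun γ => (-1) ^ (negPart X r u).length *
    partFn (signedOut X r u) (γ + (negPart X r u).sum)

/-- The support region `-∑_{b∈B} b + C(A, -B)` of `𝓟_{X\r}^F`, as a subset of `Γ`. -/
def PFsupp (X : List (ZLat ι)) (r : Submodule ℝ (Amb ι)) (u : Amb ι) : Set (ZLat ι) :=
  {γ | castV (γ + (negPart X r u).sum) ∈ coneC (signedOut X r u)}

/-- Convolution of two functions on the lattice. -/
def conv (f g : ZLat ι → ℤ) : ZLat ι → ℤ := fun γ => ∑ᶠ μ, f (γ - μ) * g μ

/-- The union of all rational hyperplanes (inside the span of `Y`). -/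
def hyperUnion (Y : List (ZLat ι)) : Set (Amb ι) :=
  {v | ∃ H, IsRational Y H ∧ Module.finrank ℝ H + 1 = Module.finrank ℝ (spanOf Y) ∧ v ∈ H}

/-- A tope for `Y`: a connected component of the complement (in the span of `Y`) of the
union of the hyperplanes spanned by sublists of `Y`. -/
def IsTope (Y : List (ZLat ι)) (τ : Set (Amb ι)) : Prop :=
  ∃ v ∈ (spanOf Y : Set (Amb ι)) \ hyperUnion Y,
    τ = connectedComponentIn ((spanOf Y : Set (Amb ι)) \ hyperUnion Y) v

/-- The set of singular vectors: the union of the cones `C(Y)` over sublists `Y` of `X`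
not spanning `V`. -/
def singSet (X : List (ZLat ι)) : Set (Amb ι) :=
  {v | ∃ Y : List (ZLat ι), (∀ a ∈ Y, a ∈ X) ∧ spanOf Y ≠ ⊤ ∧ v ∈ coneC Y}

/-- A big cell: a connected component of the complement of the set of singular vectors. -/
def IsBigCell (X : List (ZLat ι)) (c : Set (Amb ι)) : Prop :=
  ∃ v ∈ (singSet X)ᶜ, c = connectedComponentIn (singSet X)ᶜ v

/-- Minkowski difference of sets, `A - B`. -/
def sdiffSet (A B : Set (Amb ι)) : Set (Amb ι) := {x | ∃ a ∈ A, ∃ b ∈ B, x = a - b}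

section MyAux
variable {ι : Type*} [Fintype ι]

lemma castV_eq_zero {a : ZLat ι} (h : castV a = 0) : a = 0 := by
  funext i
  have := congrFun h i
  simpa [castV] using this

lemma dotR_sum_smul (u : Amb ι) (Y : List (ZLat ι)) (k : Fin Y.length → ℕ) :
    dotR u (castV (∑ i, (k i : ℤ) • Y.get i)) =
      ∑ i, (k i : ℝ) * dotR u (castV (Y.get i)) := by
  unfold dotR castV
  simp only [Finset.sum_apply, Pi.smul_apply, smul_eq_mul]
  push_cast
  simp only [Finset.mul_sum]
  rw [Finset.sum_comm]
  congr 1; funext i; congr 1; funext j; ring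

lemma finite_reps (Y : List (ZLat ι)) (u : Amb ι)
    (hu : ∀ a ∈ Y, 0 < dotR u (castV a)) (γ : ZLat ι) :
    Finite {k : Fin Y.length → ℕ // ∑ i, (k i : ℤ) • Y.get i = γ} := by
  set D := dotR u (castV γ) with hD
  have key : ∀ k : {k : Fin Y.length → ℕ // ∑ i, (k i : ℤ) • Y.get i = γ}, ∀ j,
      k.1 j ≤ Nat.ceil (D / dotR u (castV (Y.get j))) := by
    rintro ⟨k, hk⟩ j
    have hd : ∀ i, 0 < dotR u (castV (Y.get i)) := fun i => hu _ (Y.get_mem ..)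
    have hsum : ∑ i, (k i : ℝ) * dotR u (castV (Y.get i)) = D := by
      rw [← dotR_sum_smul u Y k, hk]
    have hle : (k j : ℝ) * dotR u (castV (Y.get j)) ≤ D := by
      rw [← hsum]
      exact Finset.single_le_sum (f := fun i => (k i : ℝ) * dotR u (castV (Y.get i))) (fun i _ => mul_nonneg (Nat.cast_nonneg _) (hd i).le) (Finset.mem_univ j)
    have : (k j : ℝ) ≤ D / dotR u (castV (Y.get j)) :=
      (le_div_iff₀ (hd j)).2 hle
    exact_mod_cast this.trans (Nat.le_ceil _)
  exact Finite.of_injective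
    (fun k => (fun j => (⟨k.1 j, Nat.lt_succ_of_le (key k j)⟩ :
      Fin (Nat.ceil (D / dotR u (castV (Y.get j))) + 1))))
    (by intro k l h; ext j; exact congrArg Fin.val (congrFun h j))

end MyAux

lemma sum_cons_eq (a : ZLat ι) (Y : List (ZLat ι)) (k : Fin (Y.length + 1) → ℕ) :
    ∑ i : Fin (Y.length + 1), (k i : ℤ) • (a :: Y).get i
      = (k 0 : ℤ) • a + ∑ i : Fin Y.length, (k i.succ : ℤ) • Y.get i := by
  rw [Fin.sum_univ_succ]
  rfl

lemma partFn_cons (a : ZLat ι) (Y : List (ZLat ι)) (u : Amb ι)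
    (hu : ∀ b ∈ (a :: Y), 0 < dotR u (castV b)) (γ : ZLat ι) :
    partFn (a :: Y) γ = partFn (a :: Y) (γ - a) + partFn Y γ := by
  have h1 : Finite {k : Fin (Y.length + 1) → ℕ //
      ∑ i : Fin (Y.length + 1), (k i : ℤ) • (a :: Y).get i = γ - a} :=
    finite_reps (a :: Y) u hu (γ - a)
  have h2 := finite_reps Y u (fun b hb => hu b (List.mem_cons_of_mem a hb)) γ
  have E : {k : Fin (Y.length + 1) → ℕ //
        ∑ i : Fin (Y.length + 1), (k i : ℤ) • (a :: Y).get i = γ} ≃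
      ({k : Fin (Y.length + 1) → ℕ //
          ∑ i : Fin (Y.length + 1), (k i : ℤ) • (a :: Y).get i = γ - a} ⊕
       {k : Fin Y.length → ℕ // ∑ i, (k i : ℤ) • Y.get i = γ}) := by
    refine
      { toFun := fun k =>
          if h : k.1 0 = 0 then
            Sum.inr ⟨fun i => k.1 i.succ, by
              have hk := k.2; rw [sum_cons_eq] at hk; simpa [h] using hk⟩
          else
            Sum.inl ⟨Fin.cons (k.1 0 - 1) (fun i => k.1 i.succ), by
              have hk := k.2
              rw [sum_cons_eq] at hk ⊢
              simp only [Fin.cons_zero, Fin.cons_succ]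
              have hge : 1 ≤ k.1 0 := Nat.one_le_iff_ne_zero.2 h
              have hc : ((k.1 0 - 1 : ℕ) : ℤ) = (k.1 0 : ℤ) - 1 := by
                push_cast [hge]; ring
              rw [hc, sub_smul, one_smul]
              linear_combination hk⟩
        invFun := Sum.elim
          (fun k => ⟨Fin.cons (k.1 0 + 1) (fun i => k.1 i.succ), by
            have hk := k.2
            rw [sum_cons_eq] at hk
            rw [eq_sub_iff_add_eq] at hk
            rw [sum_cons_eq]
            simp only [Fin.cons_zero, Fin.cons_succ]
            push_cast
            rw [add_smul, one_smul]
            linear_combination hk⟩)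
          (fun k => ⟨Fin.cons 0 k.1, by
            rw [sum_cons_eq]
            simp only [Fin.cons_zero, Fin.cons_succ, Nat.cast_zero, zero_smul, zero_add]
            exact k.2⟩)
        left_inv := ?_
        right_inv := ?_ }
    · intro k
      by_cases h : k.1 0 = 0
      · simp only [h, dif_pos]
        apply Subtype.ext
        show Fin.cons 0 (Fin.tail k.1) = k.1
        rw [← h, Fin.cons_self_tail]
      · simp only [h, dif_neg, not_false_iff, Sum.elim_inl]
        apply Subtype.ext
        show Fin.cons (Fin.cons (k.1 0 - 1) (Fin.tail k.1) 0 + 1)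
          (Fin.tail (Fin.cons (k.1 0 - 1) (Fin.tail k.1))) = k.1
        rw [Fin.tail_cons, Fin.cons_zero]
        have : k.1 0 - 1 + 1 = k.1 0 := Nat.succ_pred_eq_of_ne_zero h
        rw [this, Fin.cons_self_tail]
    · rintro (⟨k, hk⟩ | ⟨k, hk⟩) <;> dsimp only [Sum.elim_inl, Sum.elim_inr] <;>
        split <;> rename_i h <;> rw [Fin.cons_zero] at h
      · exact absurd h (Nat.succ_ne_zero _)
      · congr 1
        apply Subtype.ext
        show Fin.cons (Fin.cons (k 0 + 1) (Fin.tail k) 0 - 1)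
          (Fin.tail (Fin.cons (k 0 + 1) (Fin.tail k))) = k
        rw [Fin.tail_cons, Fin.cons_zero, Nat.add_sub_cancel, Fin.cons_self_tail]
      · simp only [Fin.cons_succ]
      · exact absurd rfl h
  show (Nat.card {k : Fin (Y.length + 1) → ℕ //
        ∑ i : Fin (Y.length + 1), (k i : ℤ) • (a :: Y).get i = γ} : ℤ)
      = (Nat.card {k : Fin (Y.length + 1) → ℕ //
          ∑ i : Fin (Y.length + 1), (k i : ℤ) • (a :: Y).get i = γ - a} : ℤ)
        + (Nat.card {k : Fin Y.length → ℕ // ∑ i, (k i : ℤ) • Y.get i = γ} : ℤ)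
  rw [Nat.card_congr E, Nat.card_sum]
  push_cast
  ring

lemma nab_comm (a b : ZLat ι) (f : ZLat ι → ℤ) : nab a (nab b f) = nab b (nab a f) := by
  funext γ
  simp only [nab]
  rw [sub_right_comm γ a b]
  ring

lemma nab_nabL (a : ZLat ι) (Y : List (ZLat ι)) (f : ZLat ι → ℤ) :
    nab a (nabL Y f) = nabL Y (nab a f) := by
  induction Y with
  | nil => rfl
  | cons b Y ih =>
      show nab a (nab b (nabL Y f)) = nab b (nabL Y (nab a f))
      rw [nab_comm, ih]

lemma partFn_nil : partFn ([] : List (ZLat ι)) = delta0 := by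
  funext γ
  unfold partFn delta0
  by_cases h : γ = 0
  · subst h
    rw [if_pos rfl]
    norm_cast
    rw [Nat.card_eq_one_iff_unique]
    constructor
    · constructor
      rintro ⟨k, hk⟩ ⟨l, hl⟩
      apply Subtype.ext
      funext i
      exact absurd i.2 (by simp)
    · exact ⟨⟨fun i => 0, by simp⟩⟩
  · rw [if_neg h]
    norm_cast
    rw [Nat.card_eq_zero]
    left
    constructor
    rintro ⟨k, hk⟩
    exact h (by simpa using hk.symm)

lemma nabla_aux (X : List (ZLat ι)) (u : Amb ι)
    (hu : ∀ a ∈ X, 0 < dotR u (castV a)) : nabL X (partFn X) = delta0 := by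
  induction X with
  | nil => exact partFn_nil
  | cons a Y ih =>
      have hu' : ∀ b ∈ Y, 0 < dotR u (castV b) := fun b hb => hu b (List.mem_cons_of_mem a hb)
      have key : nab a (partFn (a :: Y)) = partFn Y := by
        funext γ
        simp only [nab]
        rw [partFn_cons a Y u hu γ]
        ring
      show nab a (nabL Y (partFn (a :: Y))) = delta0
      rw [nab_nabL, key, ih hu']

lemma coneC_zero' (Y : List (ZLat ι)) : (0 : Amb ι) ∈ coneC Y :=
  ⟨fun _ => 0, fun _ => le_refl 0, by simp⟩

lemma coneC_add' {Y : List (ZLat ι)} {v w : Amb ι} (hv : v ∈ coneC Y) (hw : w ∈ coneC Y) :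
    v + w ∈ coneC Y := by
  obtain ⟨t, ht, rfl⟩ := hv
  obtain ⟨s, hs, rfl⟩ := hw
  refine ⟨t + s, fun i => add_nonneg (ht i) (hs i), ?_⟩
  rw [← Finset.sum_add_distrib]
  congr 1
  funext i
  rw [Pi.add_apply, add_smul]

lemma coneC_smul' {Y : List (ZLat ι)} {v : Amb ι} {c : ℝ} (hc : 0 ≤ c) (hv : v ∈ coneC Y) :
    c • v ∈ coneC Y := by
  obtain ⟨t, ht, rfl⟩ := hv
  refine ⟨fun i => c * t i, fun i => mul_nonneg hc (ht i), ?_⟩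
  rw [Finset.smul_sum]
  congr 1
  funext i
  rw [smul_smul]

lemma coneC_mem' {X : List (ZLat ι)} {a : ZLat ι} (ha : a ∈ X) : castV a ∈ coneC X := by
  obtain ⟨i, rfl⟩ := List.mem_iff_get.1 ha
  refine ⟨fun j => if j = i then 1 else 0, fun j => by dsimp only; split <;> norm_num, ?_⟩
  dsimp only
  rw [Finset.sum_eq_single i]
  · rw [if_pos rfl, one_smul]
  · intro j _ hj
    rw [if_neg hj, zero_smul]
  · intro h
    exact absurd (Finset.mem_univ i) h

lemma exists_pos_functional (X : List (ZLat ι)) (hX0 : ∀ a ∈ X, a ≠ 0)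
    (hpt : PointedList X) : ∃ u : Amb ι, ∀ a ∈ X, 0 < dotR u (castV a) := by
  classical
  set S : Set (Amb ι) := castV '' {a | a ∈ X} with hS
  have hSfin : S.Finite := (X.finite_toSet).image _
  have hScone : ∀ v ∈ S, v ∈ coneC X := by
    rintro v ⟨a, ha, rfl⟩
    exact coneC_mem' ha
  have h0K : (0 : Amb ι) ∉ convexHull ℝ S := by
    intro h0
    obtain ⟨κ, hκ, w, z, hw0, hw1, hzS, hsum⟩ := mem_convexHull_iff_exists_fintype.1 h0
    obtain ⟨i₀, hi₀⟩ : ∃ i₀, 0 < w i₀ := by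
      by_contra hc
      push_neg at hc
      have : ∀ i, w i = 0 := fun i => le_antisymm (hc i) (hw0 i)
      rw [Finset.sum_congr rfl (fun i _ => this i)] at hw1
      simp at hw1
    have hmem : w i₀ • z i₀ ∈ coneC X := coneC_smul' hi₀.le (hScone _ (hzS i₀))
    have hrest : ∑ i ∈ Finset.univ.erase i₀, w i • z i ∈ coneC X := by
      refine Finset.sum_induction _ (· ∈ coneC X) (fun a b ha hb => coneC_add' ha hb)
        (coneC_zero' X) ?_
      intro i _
      exact coneC_smul' (hw0 i) (hScone _ (hzS i))
    have hsplit : w i₀ • z i₀ + ∑ i ∈ Finset.univ.erase i₀, w i • z i = 0 := by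
      rw [Finset.add_sum_erase _ (fun i => w i • z i) (Finset.mem_univ i₀)]
      exact hsum
    have hneg : -(w i₀ • z i₀) ∈ coneC X := by
      rw [neg_eq_of_add_eq_zero_right hsplit]
      exact hrest
    have hzero : w i₀ • z i₀ = 0 := hpt _ hmem hneg
    obtain ⟨a, haX, hav⟩ := hzS i₀
    rcases smul_eq_zero.1 hzero with h | h
    · exact hi₀.ne' h
    · rw [← hav] at h
      exact hX0 a haX (castV_eq_zero h)
  have hK : IsClosed (convexHull ℝ S) := (hSfin.isCompact_convexHull ℝ).isClosed
  obtain ⟨f, c, hc0, hcb⟩ :=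
    geometric_hahn_banach_point_closed (convex_convexHull ℝ S) hK h0K
  refine ⟨fun i => f (Pi.single i 1), fun a ha => ?_⟩
  have hrep : ∀ v : Amb ι, dotR (fun i => f (Pi.single i 1)) v = f v := by
    intro v
    have hv : v = ∑ i, v i • (Pi.single i 1 : Amb ι) := by
      conv_lhs => rw [pi_eq_sum_univ v]
      refine Finset.sum_congr rfl (fun i _ => ?_)
      congr 1
      funext j
      simp [Pi.single_apply, eq_comm]
    conv_rhs => rw [hv]
    rw [map_sum]
    unfold dotR
    refine Finset.sum_congr rfl (fun i _ => ?_)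
    rw [map_smul, smul_eq_mul]
    dsimp only
    ring
  rw [hrep]
  have h1 : f 0 < c := hc0
  rw [map_zero] at h1
  have h2 : c < f (castV a) :=
    hcb _ (subset_convexHull ℝ S ⟨a, ha, rfl⟩)
  linarith

/-- If `X` is a list of nonzero lattice vectors spanning `V` and generating a pointed
cone, then the partition function satisfies `∇_X 𝓟_X = δ₀`. -/
theorem partFn_nabla {ι : Type*} [Fintype ι] (X : List (ZLat ι))
    (hX0 : ∀ a ∈ X, a ≠ 0) (hspan : spanOf X = ⊤) (hpt : PointedList X) :
    nabL X (partFn X) = delta0 := by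
  obtain ⟨u, hu⟩ := exists_pos_functional X hX0 hpt
  exact nabla_aux X u hu
end
end

section
/- Let X\r be split into the sublists A (elements positive on a regular vector u) and B (elements negative on u). Then the function P_{X\r}^{F} defined as the signed shifted convolution of geometric series, P_{X\r}^{F} = (-1)^{|B|} τ_{-Σ_{b∈B} b} (Π_{a∈A} Σ_{k≥0} δ_{ka}) * (Π_{b∈B} Σ_{k≥0} δ_{-kb}), is the unique function on Γ satisfying ∇_{X\r} P_{X\r}^{F} = δ₀ with support contained in -Σ_{b∈B} b + C(A, -B), where C(A,-B) is the cone generated by A and -B. -/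
open Function

attribute [local instance] Classical.propDecidable

noncomputable section

variable {ι : Type*} [Fintype ι]

namespace PFproof
variable {ι : Type*} [Fintype ι]

def ψ (u : Amb ι) (γ : ZLat ι) : ℝ := dotR u (castV γ)

lemma psi_add (u : Amb ι) (x y : ZLat ι) : ψ u (x + y) = ψ u x + ψ u y := by
  simp [ψ, dotR, castV, mul_add, Finset.sum_add_distrib]

lemma psi_neg (u : Amb ι) (x : ZLat ι) : ψ u (-x) = -ψ u x := by
  simp [ψ, dotR, castV, Finset.sum_neg_distrib]

lemma psi_sub (u : Amb ι) (x y : ZLat ι) : ψ u (x - y) = ψ u x - ψ u y := by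
  rw [sub_eq_add_neg, psi_add, psi_neg]; ring

lemma psi_zsmul (u : Amb ι) (n : ℤ) (x : ZLat ι) : ψ u (n • x) = (n : ℝ) * ψ u x := by
  simp only [ψ, dotR, castV, Pi.smul_apply, smul_eq_mul, Int.cast_mul, Finset.mul_sum]
  exact Finset.sum_congr rfl (fun i _ => by push_cast; ring)

lemma psi_finsum {m : Type*} (u : Amb ι) (s : Finset m) (g : m → ZLat ι) :
    ψ u (∑ i ∈ s, g i) = ∑ i ∈ s, ψ u (g i) := by
  classical
  induction s using Finset.cons_induction with
  | empty => simp [ψ, dotR, castV]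
  | cons a s ha ih => rw [Finset.sum_cons, Finset.sum_cons, psi_add, ih]

lemma castV_add (x y : ZLat ι) : castV (x + y) = castV x + castV y := by
  funext j; simp [castV]

lemma castV_sum {m : Type*} [Fintype m] (k : m → ℕ) (v : m → ZLat ι) :
    castV (∑ i, (k i : ℤ) • v i) = ∑ i, (k i : ℝ) • castV (v i) := by
  funext j
  simp only [castV, Finset.sum_apply, Pi.smul_apply, smul_eq_mul]
  push_cast
  ring

lemma dot_sum {m : Type*} [Fintype m] (u : Amb ι) (t : m → ℝ) (w : m → Amb ι) :
    dotR u (∑ i, t i • w i) = ∑ i, t i * dotR u (w i) := by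
  simp only [dotR, Finset.sum_apply, Pi.smul_apply, smul_eq_mul, Finset.mul_sum]
  rw [Finset.sum_comm]
  exact Finset.sum_congr rfl (fun i _ => Finset.sum_congr rfl (fun j _ => by ring))

end PFproof
namespace PFproof
variable {ι : Type*} [Fintype ι]

lemma nabL_cons (a : ZLat ι) (Z : List (ZLat ι)) (f : ZLat ι → ℤ) :
    nabL (a :: Z) f = nab a (nabL Z f) := rfl

lemma nab_comm (a b : ZLat ι) (f : ZLat ι → ℤ) : nab a (nab b f) = nab b (nab a f) := by
  funext γ
  simp only [nab, sub_sub]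
  rw [add_comm]
  ring

lemma nabL_nab (Z : List (ZLat ι)) (a : ZLat ι) (f : ZLat ι → ℤ) :
    nabL Z (nab a f) = nab a (nabL Z f) := by
  induction Z with
  | nil => rfl
  | cons b T ih => rw [nabL_cons, ih, nab_comm, nabL_cons]

lemma nab_sub (a : ZLat ι) (f g : ZLat ι → ℤ) :
    nab a (fun γ => f γ - g γ) = fun γ => nab a f γ - nab a g γ := by
  funext γ; simp only [nab]; ring

lemma nabL_sub (Z : List (ZLat ι)) (f g : ZLat ι → ℤ) :
    nabL Z (fun γ => f γ - g γ) = fun γ => nabL Z f γ - nabL Z g γ := by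
  induction Z with
  | nil => rfl
  | cons b T ih => rw [nabL_cons, ih, nab_sub, nabL_cons, nabL_cons]

lemma nab_shift (a l : ZLat ι) (f : ZLat ι → ℤ) :
    nab a (fun γ => f (γ + l)) = fun γ => nab a f (γ + l) := by
  funext γ; simp only [nab, sub_add_eq_add_sub]

lemma nabL_shift (Z : List (ZLat ι)) (l : ZLat ι) (f : ZLat ι → ℤ) :
    nabL Z (fun γ => f (γ + l)) = fun γ => nabL Z f (γ + l) := by
  induction Z with
  | nil => rfl
  | cons b T ih => rw [nabL_cons, ih, nab_shift, nabL_cons]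

lemma nab_neg' (a : ZLat ι) (f : ZLat ι → ℤ) :
    nab a (fun γ => -(f γ)) = fun γ => -(nab a f γ) := by
  funext γ; simp only [nab]; ring

lemma nabL_neg' (Z : List (ZLat ι)) (f : ZLat ι → ℤ) :
    nabL Z (fun γ => -(f γ)) = fun γ => -(nabL Z f γ) := by
  induction Z with
  | nil => rfl
  | cons b T ih => rw [nabL_cons, ih, nab_neg', nabL_cons]

lemma nab_flip (a : ZLat ι) (h : ZLat ι → ℤ) :
    nab a (fun γ => -(h (γ + a))) = nab (-a) h := by
  funext γ
  simp only [nab, sub_neg_eq_add, sub_add_cancel]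
  ring

end PFproof
namespace PFproof
variable {ι : Type*} [Fintype ι]

lemma finS (u : Amb ι) (Z : List (ZLat ι)) (hZ : ∀ c ∈ Z, 0 < ψ u c) (γ : ZLat ι) :
    Finite {k : Fin Z.length → ℕ // ∑ i, (k i : ℤ) • Z.get i = γ} := by
  have hd : ∀ i : Fin Z.length, 0 < ψ u (Z.get i) := fun i => hZ _ (List.get_mem Z i)
  set N : Fin Z.length → ℕ := fun i => ⌈ψ u γ / ψ u (Z.get i)⌉₊ with hN
  have hsub : {k : Fin Z.length → ℕ | ∑ i, (k i : ℤ) • Z.get i = γ} ⊆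
      Set.pi Set.univ (fun i => Set.Iic (N i)) := by
    intro k hk
    have hsum : ψ u γ = ∑ i, (k i : ℝ) * ψ u (Z.get i) := by
      rw [← hk, psi_finsum]
      refine Finset.sum_congr rfl (fun i _ => ?_)
      rw [psi_zsmul]; push_cast; ring
    intro i _
    have h1 : (k i : ℝ) * ψ u (Z.get i) ≤ ψ u γ := by
      rw [hsum]
      exact Finset.single_le_sum
        (fun j _ => mul_nonneg (Nat.cast_nonneg _) (hd j).le) (Finset.mem_univ i)
    have h2 : (k i : ℝ) ≤ ψ u γ / ψ u (Z.get i) := (le_div_iff₀ (hd i)).2 h1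
    have h3 : (k i : ℝ) ≤ (N i : ℝ) := h2.trans (Nat.le_ceil _)
    exact Nat.cast_le.mp h3
  exact (Set.Finite.subset (Set.Finite.pi (fun i => Set.finite_Iic (N i))) hsub).to_subtype

lemma key_sum (c : ZLat ι) (W : List (ZLat ι)) (k : Fin (W.length + 1) → ℕ) :
    ∑ i : Fin (W.length + 1), (k i : ℤ) • (c :: W).get i
      = (k 0 : ℤ) • c + ∑ i : Fin W.length, (k i.succ : ℤ) • W.get i := by
  rw [Fin.sum_univ_succ]
  rfl

lemma partFn_cons (u : Amb ι) (c : ZLat ι) (W : List (ZLat ι))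
    (h : ∀ a ∈ c :: W, 0 < ψ u a) (γ : ZLat ι) :
    partFn (c :: W) γ = partFn W γ + partFn (c :: W) (γ - c) := by
  classical
  have hW : ∀ a ∈ W, 0 < ψ u a := fun a ha => h a (List.mem_cons_of_mem _ ha)
  have e : {k : Fin (W.length + 1) → ℕ // ∑ i, (k i : ℤ) • (c :: W).get i = γ} ≃
      ({k : Fin W.length → ℕ // ∑ i, (k i : ℤ) • W.get i = γ} ⊕
       {k : Fin (W.length + 1) → ℕ // ∑ i, (k i : ℤ) • (c :: W).get i = γ - c}) :=
  { toFun := fun k => if h0 : k.1 0 = 0 then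
        Sum.inl ⟨Fin.tail k.1, by
          have hk := k.2; rw [key_sum] at hk
          simpa [h0, Fin.tail] using hk⟩
      else
        Sum.inr ⟨Fin.cons (k.1 0 - 1) (Fin.tail k.1), by
          rw [key_sum]
          simp only [Fin.cons_zero, Fin.cons_succ]
          have hk := k.2; rw [key_sum] at hk
          have h1 : ((k.1 0 - 1 : ℕ) : ℤ) = (k.1 0 : ℤ) - 1 := by omega
          rw [h1, sub_smul, one_smul]
          simp only [Fin.tail]
          rw [sub_add_eq_add_sub, hk]⟩,
    invFun := fun s => match s with
      | Sum.inl k => ⟨Fin.cons 0 k.1, by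
          rw [key_sum]
          simp only [Fin.cons_zero, Fin.cons_succ, Nat.cast_zero, zero_smul, zero_add]
          exact k.2⟩
      | Sum.inr k => ⟨Fin.cons (k.1 0 + 1) (Fin.tail k.1), by
          rw [key_sum]
          simp only [Fin.cons_zero, Fin.cons_succ]
          have hk := k.2; rw [key_sum] at hk
          have h1 : ((k.1 0 + 1 : ℕ) : ℤ) = (k.1 0 : ℤ) + 1 := by omega
          rw [h1, add_smul, one_smul]
          simp only [Fin.tail]
          rw [add_right_comm, hk, sub_add_cancel]⟩,
    left_inv := by
      intro k
      by_cases h0 : k.1 0 = 0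
      · simp only [h0, dif_pos]
        apply Subtype.ext
        simp only
        rw [← h0, Fin.cons_self_tail]
      · simp only [h0, dif_neg, not_false_iff]
        apply Subtype.ext
        simp only [Fin.cons_zero, Fin.tail_cons]
        have hs : k.1 0 - 1 + 1 = k.1 0 := Nat.succ_pred_eq_of_pos (Nat.pos_of_ne_zero h0)
        rw [hs, Fin.cons_self_tail],
    right_inv := by
      rintro (k | k)
      · have h0 : (Fin.cons 0 k.1 : Fin (W.length + 1) → ℕ) 0 = 0 := Fin.cons_zero _ _
        simp only [h0, dif_pos]
        congr 1
      · have h0 : (Fin.cons (k.1 0 + 1) (Fin.tail k.1) : Fin (W.length + 1) → ℕ) 0 ≠ 0 := by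
          simp
        simp only [h0, dif_neg, not_false_iff]
        congr 1
        apply Subtype.ext
        simp only [Fin.cons_zero, Fin.tail_cons, Nat.add_sub_cancel]
        exact Fin.cons_self_tail _ }
  have f1 : Finite {k : Fin (W.length + 1) → ℕ // ∑ i, (k i : ℤ) • (c :: W).get i = γ} :=
    finS u (c :: W) h γ
  have f2 : Finite {k : Fin W.length → ℕ // ∑ i, (k i : ℤ) • W.get i = γ} := finS u _ hW γ
  have f3 : Finite {k : Fin (W.length + 1) → ℕ // ∑ i, (k i : ℤ) • (c :: W).get i = γ - c} :=
    finS u (c :: W) h (γ - c)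
  have hcard := Nat.card_congr e
  rw [Nat.card_sum] at hcard
  show ((Nat.card {k : Fin (W.length + 1) → ℕ // ∑ i, (k i : ℤ) • (c :: W).get i = γ}) : ℤ) =
    ((Nat.card {k : Fin W.length → ℕ // ∑ i, (k i : ℤ) • W.get i = γ}) : ℤ) +
    ((Nat.card {k : Fin (W.length + 1) → ℕ // ∑ i, (k i : ℤ) • (c :: W).get i = γ - c}) : ℤ)
  exact_mod_cast hcard

lemma nab_partFn_cons (u : Amb ι) (c : ZLat ι) (W : List (ZLat ι))
    (h : ∀ a ∈ c :: W, 0 < ψ u a) :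
    nab c (partFn (c :: W)) = partFn W := by
  funext γ
  have := partFn_cons u c W h γ
  simp only [nab]
  omega

lemma partFn_nil : partFn ([] : List (ZLat ι)) = delta0 := by
  funext γ
  simp only [partFn, delta0]
  by_cases hγ : γ = 0
  · subst hγ
    rw [if_pos rfl]
    haveI : Unique {k : Fin ([] : List (ZLat ι)).length → ℕ //
        ∑ i, (k i : ℤ) • ([] : List (ZLat ι)).get i = 0} :=
      ⟨⟨⟨fun i => i.elim0, by simp⟩⟩, fun a => Subtype.ext (funext fun i => i.elim0)⟩
    simp only [Nat.card_unique, Nat.cast_one]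
  · rw [if_neg hγ]
    haveI : IsEmpty {k : Fin ([] : List (ZLat ι)).length → ℕ //
        ∑ i, (k i : ℤ) • ([] : List (ZLat ι)).get i = γ} :=
      ⟨fun k => hγ (by simpa using k.2.symm)⟩
    simp only [Nat.card_of_isEmpty, Nat.cast_zero]

lemma nabL_partFn (u : Amb ι) : ∀ Z : List (ZLat ι), (∀ c ∈ Z, 0 < ψ u c) →
    nabL Z (partFn Z) = delta0
  | [], _ => partFn_nil
  | c :: W, h => by
    rw [nabL_cons, ← nabL_nab, nab_partFn_cons u c W h]
    exact nabL_partFn u W (fun a ha => h a (List.mem_cons_of_mem _ ha))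

end PFproof
namespace PFproof
variable {ι : Type*} [Fintype ι]

lemma nab_zero_of_bounded (u : Amb ι) (a : ZLat ι) (ha : ψ u a ≠ 0) (h : ZLat ι → ℤ)
    (h0 : nab a h = 0) (m : ℝ) (hb : ∀ γ, h γ ≠ 0 → m ≤ ψ u γ) : h = 0 := by
  have step : ∀ γ, h γ = h (γ - a) := by
    intro γ
    have := congrFun h0 γ
    simp only [nab, Pi.zero_apply] at this
    omega
  have iter_down : ∀ n : ℕ, ∀ γ, h γ = h (γ - (n : ℤ) • a) := by
    intro n
    induction n with
    | zero => intro γ; simp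
    | succ n ih =>
      intro γ
      rw [ih γ, step (γ - (n : ℤ) • a)]
      congr 1
      push_cast [add_smul]
      abel
  have iter_up : ∀ n : ℕ, ∀ γ, h γ = h (γ + (n : ℤ) • a) := by
    intro n
    induction n with
    | zero => intro γ; simp
    | succ n ih =>
      intro γ
      rw [ih γ]
      have hc : γ + ((n + 1 : ℕ) : ℤ) • a - a = γ + (n : ℤ) • a := by
        push_cast [add_smul]; abel
      rw [show h (γ + ((n + 1 : ℕ) : ℤ) • a) = h (γ + ((n + 1 : ℕ) : ℤ) • a - a) from step _, hc]
  funext γ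
  show h γ = 0
  rcases ha.lt_or_gt with hneg | hpos
  · -- ψ u a < 0 : go up
    obtain ⟨n, hn⟩ := exists_nat_gt ((ψ u γ - m) / (-(ψ u a)))
    rw [iter_up n γ]
    by_contra hne
    have hb' := hb _ hne
    rw [psi_add, psi_zsmul] at hb'
    have hd : (ψ u γ - m) < n * (-(ψ u a)) := by
      rw [div_lt_iff₀ (by linarith)] at hn
      linarith
    push_cast at hb'
    linarith
  · obtain ⟨n, hn⟩ := exists_nat_gt ((ψ u γ - m) / ψ u a)
    rw [iter_down n γ]
    by_contra hne
    have hb' := hb _ hne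
    rw [psi_sub, psi_zsmul] at hb'
    have hd : (ψ u γ - m) < n * ψ u a := by
      rw [div_lt_iff₀ hpos] at hn
      linarith
    push_cast at hb'
    linarith

lemma bounded_nab (u : Amb ι) (a : ZLat ι) (h : ZLat ι → ℤ) (m : ℝ)
    (hb : ∀ γ, h γ ≠ 0 → m ≤ ψ u γ) :
    ∀ γ, nab a h γ ≠ 0 → min m (m + ψ u a) ≤ ψ u γ := by
  intro γ hγ
  simp only [nab] at hγ
  rcases em (h γ = 0) with h1 | h1
  · have h2 : h (γ - a) ≠ 0 := fun hc => hγ (by rw [h1, hc]; ring)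
    have := hb _ h2
    rw [psi_sub] at this
    exact le_trans (min_le_right _ _) (by linarith)
  · exact le_trans (min_le_left _ _) (hb _ h1)

lemma bounded_nabL (u : Amb ι) (Z : List (ZLat ι)) (h : ZLat ι → ℤ) :
    (∃ m, ∀ γ, h γ ≠ 0 → m ≤ ψ u γ) →
    ∃ m, ∀ γ, nabL Z h γ ≠ 0 → m ≤ ψ u γ := by
  induction Z with
  | nil => exact id
  | cons a T ih =>
    intro hb
    obtain ⟨m, hm⟩ := ih hb
    exact ⟨min m (m + ψ u a), bounded_nab u a (nabL T h) m hm⟩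

lemma nabL_zero_of_bounded (u : Amb ι) : ∀ Z : List (ZLat ι), (∀ c ∈ Z, ψ u c ≠ 0) →
    ∀ h : ZLat ι → ℤ, nabL Z h = 0 → (∃ m, ∀ γ, h γ ≠ 0 → m ≤ ψ u γ) → h = 0
  | [], _, h, h0, _ => h0
  | a :: W, hne, h, h0, hb => by
    obtain ⟨m, hm⟩ := bounded_nabL u W h hb
    have : nabL W h = 0 :=
      nab_zero_of_bounded u a (hne a List.mem_cons_self) (nabL W h) h0 m hm
    exact nabL_zero_of_bounded u W (fun c hc => hne c (List.mem_cons_of_mem _ hc)) h this hb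

lemma swap (u : Amb ι) : ∀ L : List (ZLat ι), (∀ a ∈ L, dotR u (castV a) ≠ 0) →
    ∀ P : ZLat ι → ℤ,
    nabL L (fun γ => (-1) ^ (L.filter (fun a => decide (dotR u (castV a) < 0))).length *
        P (γ + (L.filter (fun a => decide (dotR u (castV a) < 0))).sum))
      = nabL (L.map (fun a => if 0 < dotR u (castV a) then a else -a)) P
  | [], _, P => by
    simp only [List.filter_nil, List.length_nil, pow_zero, List.sum_nil, add_zero, one_mul,
      List.map_nil]
  | a :: T, hne, P => by
    have hda := hne a List.mem_cons_self
    have hT : ∀ b ∈ T, dotR u (castV b) ≠ 0 := fun b hb => hne b (List.mem_cons_of_mem _ hb)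
    by_cases hpos : 0 < dotR u (castV a)
    · have hfilter : (a :: T).filter (fun a => decide (dotR u (castV a) < 0)) =
          T.filter (fun a => decide (dotR u (castV a) < 0)) := by
        rw [List.filter_cons, if_neg (by simp [not_lt.2 hpos.le])]
      rw [hfilter, List.map_cons, if_pos hpos, nabL_cons, nabL_cons,
        swap u T hT P]
    · have hneg : dotR u (castV a) < 0 := lt_of_le_of_ne (not_lt.1 hpos) hda
      have hfilter : (a :: T).filter (fun a => decide (dotR u (castV a) < 0)) =
          a :: T.filter (fun a => decide (dotR u (castV a) < 0)) := by
        rw [List.filter_cons, if_pos (by simp [hneg])]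
      set s := (T.filter (fun a => decide (dotR u (castV a) < 0))).sum with hs
      set n := (T.filter (fun a => decide (dotR u (castV a) < 0))).length with hn
      set G : ZLat ι → ℤ := fun γ => (-1) ^ n * P (γ + s) with hG
      have hinner : (fun γ => (-1) ^ ((a :: T).filter
            (fun a => decide (dotR u (castV a) < 0))).length *
            P (γ + ((a :: T).filter (fun a => decide (dotR u (castV a) < 0))).sum))
          = fun γ => -(G (γ + a)) := by
        funext γ
        rw [hfilter]
        simp only [List.length_cons, List.sum_cons, hG]
        rw [pow_succ, ← add_assoc]
        ring
      rw [hinner, nabL_cons]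
      have h2 : nabL T (fun γ => -(G (γ + a))) = fun γ => -((nabL T G) (γ + a)) := by
        rw [show (fun γ => -(G (γ + a))) = (fun γ => -((fun δ => G (δ + a)) γ)) from rfl,
          nabL_neg', nabL_shift]
      rw [h2, nab_flip, swap u T hT P, List.map_cons, if_neg hpos, nabL_cons]

end PFproof
/-- The function `𝓟_{X\r}^F` given by the explicit signed-shifted-convolution formula is
the unique function on `Γ` with `∇_{X\r} 𝓟_{X\r}^F = δ₀` and support contained in
`-∑_{b∈B} b + C(A, -B)`. -/
theorem PF_characterization {ι : Type*} [Fintype ι] (X : List (ZLat ι))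
    (hX0 : ∀ a ∈ X, a ≠ 0) (hspan : spanOf X = ⊤)
    (r : Submodule ℝ (Amb ι)) (hr : IsRational X r) (u : Amb ι) (hu : Reg X r u) :
    (nabOut X r (PF X r u) = delta0 ∧ Function.support (PF X r u) ⊆ PFsupp X r u) ∧
    ∀ f : ZLat ι → ℤ, nabOut X r f = delta0 →
      Function.support f ⊆ PFsupp X r u → f = PF X r u := by
  classical
  obtain ⟨hperp, hreg⟩ := hu
  have hYne : ∀ a ∈ outSub X r, dotR u (castV a) ≠ 0 := by
    intro a ha
    rw [outSub, List.mem_filter] at ha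
    exact hreg a ha.1 (of_decide_eq_true ha.2)
  have hpos : ∀ c ∈ signedOut X r u, 0 < PFproof.ψ u c := by
    intro c hc
    rw [signedOut] at hc
    obtain ⟨a, ha, rfl⟩ := List.mem_map.1 hc
    have hd := hYne a ha
    by_cases hp : 0 < dotR u (castV a)
    · rw [if_pos hp]; exact hp
    · rw [if_neg hp]
      have hlt : PFproof.ψ u a < 0 := lt_of_le_of_ne (not_lt.1 hp) hd
      rw [PFproof.psi_neg]
      linarith
  -- Existence: ∇_{X\r} PF = δ₀
  have heq : nabOut X r (PF X r u) = delta0 := by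
    show nabL (outSub X r) (PF X r u) = delta0
    have hswap := PFproof.swap u (outSub X r) hYne (partFn (signedOut X r u))
    rw [show PF X r u = (fun γ =>
        (-1) ^ ((outSub X r).filter (fun a => decide (dotR u (castV a) < 0))).length *
          partFn (signedOut X r u)
            (γ + ((outSub X r).filter (fun a => decide (dotR u (castV a) < 0))).sum)) from rfl]
    rw [hswap]
    exact PFproof.nabL_partFn u (signedOut X r u) hpos
  -- Support containment for PF
  have hsupp : Function.support (PF X r u) ⊆ PFsupp X r u := by
    intro γ hγ
    have hPF : PF X r u γ ≠ 0 := hγ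
    rw [PF] at hPF
    have h2 : partFn (signedOut X r u) (γ + (negPart X r u).sum) ≠ 0 :=
      right_ne_zero_of_mul hPF
    rw [partFn] at h2
    have h3 : Nat.card {k : Fin (signedOut X r u).length → ℕ //
        ∑ i, (k i : ℤ) • (signedOut X r u).get i = γ + (negPart X r u).sum} ≠ 0 := by
      exact_mod_cast h2
    obtain ⟨k, hk⟩ := (Nat.card_ne_zero.mp h3).1
    show castV (γ + (negPart X r u).sum) ∈ coneC (signedOut X r u)
    exact ⟨fun i => (k i : ℝ), fun i => Nat.cast_nonneg _,
      by rw [← hk, PFproof.castV_sum]⟩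
  -- Lower bound on ψ over the support region
  have hbound : ∀ γ ∈ PFsupp X r u,
      -(PFproof.ψ u ((negPart X r u).sum)) ≤ PFproof.ψ u γ := by
    intro γ hγ
    obtain ⟨t, ht0, hteq⟩ := hγ
    have h1 : PFproof.ψ u (γ + (negPart X r u).sum)
        = ∑ i, t i * dotR u (castV ((signedOut X r u).get i)) := by
      show dotR u (castV (γ + (negPart X r u).sum)) = _
      rw [hteq, PFproof.dot_sum]
    have h2 : 0 ≤ PFproof.ψ u (γ + (negPart X r u).sum) := by
      rw [h1]
      refine Finset.sum_nonneg (fun i _ => mul_nonneg (ht0 i) ?_)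
      exact (hpos _ (List.get_mem _ i)).le
    rw [PFproof.psi_add] at h2
    linarith
  refine ⟨⟨heq, hsupp⟩, ?_⟩
  -- Uniqueness
  intro f hf hfsupp
  have hg0 : nabL (outSub X r) (fun γ => f γ - PF X r u γ) = 0 := by
    rw [PFproof.nabL_sub]
    funext γ
    have h1 : nabL (outSub X r) f γ = delta0 γ := congrFun hf γ
    have h2 : nabL (outSub X r) (PF X r u) γ = delta0 γ := congrFun heq γ
    simp [h1, h2]
  have hb : ∃ m, ∀ γ, (fun γ => f γ - PF X r u γ) γ ≠ 0 → m ≤ PFproof.ψ u γ := by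
    refine ⟨-(PFproof.ψ u ((negPart X r u).sum)), fun γ hγ => ?_⟩
    rcases em (f γ = 0) with h1 | h1
    · have h2 : PF X r u γ ≠ 0 := by
        intro hc
        exact hγ (by simp [h1, hc])
      exact hbound γ (hsupp h2)
    · exact hbound γ (hfsupp h1)
  have hzero := PFproof.nabL_zero_of_bounded u (outSub X r) hYne
    (fun γ => f γ - PF X r u γ) hg0 hb
  funext γ
  have hγ := congrFun hzero γ
  simp only [Pi.zero_apply, sub_eq_zero] at hγ
  exact hγ
end
end

section
/- If r is a rational subspace, F a regular face for X\r, and g a function supported on Γ ∩ r, then the convolution P_{X\r}^{F} * g is well-defined: for every γ ∈ Γ there are only finitely many pairs (λ, μ) with λ in the support of P_{X\r}^{F}, μ ∈ Γ ∩ r, and γ = λ + μ. -/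
open Function

attribute [local instance] Classical.propDecidable

noncomputable section

variable {ι : Type*} [Fintype ι]

/-- The pairing with `u` as an additive hom on the lattice. -/
def phiH (u : Amb ι) : ZLat ι →+ ℝ where
  toFun γ := ∑ i, u i * (γ i : ℝ)
  map_zero' := by simp
  map_add' a b := by
    simp [Pi.add_apply, Int.cast_add, mul_add, Finset.sum_add_distrib]

lemma phiH_eq (u : Amb ι) (v : ZLat ι) : phiH u v = dotR u (castV v) := rfl

lemma phiH_sum (u : Amb ι) (Y : List (ZLat ι)) (k : Fin Y.length → ℕ) :
    phiH u (∑ i, (k i : ℤ) • Y.get i) = ∑ i, (k i : ℝ) * phiH u (Y.get i) := by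
  rw [map_sum]
  refine Finset.sum_congr rfl fun i _ => ?_
  rw [map_zsmul, zsmul_eq_mul, Int.cast_natCast]

lemma phiH_pos (X : List (ZLat ι)) (r : Submodule ℝ (Amb ι)) (u : Amb ι)
    (hu : Reg X r u) : ∀ a ∈ signedOut X r u, 0 < phiH u a := by
  intro a ha
  rw [signedOut, List.mem_map] at ha
  obtain ⟨b, hb, rfl⟩ := ha
  rw [outSub, List.mem_filter] at hb
  have hbr : castV b ∉ r := by simpa using hb.2
  have hne := hu.2 b hb.1 hbr
  rcases lt_or_ge 0 (dotR u (castV b)) with h | h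
  · rw [if_pos h, phiH_eq]; exact h
  · rw [if_neg (not_lt.mpr h), map_neg, phiH_eq]
    exact neg_pos.mpr (lt_of_le_of_ne h hne)

/-- The convolution `𝓟_{X\r}^F * g` for `g` supported on `Γ ∩ r` is well defined: for each
`γ ∈ Γ` there are only finitely many decompositions `γ = λ + μ` with `λ` in the support of
`𝓟_{X\r}^F` and `μ ∈ Γ ∩ r`. -/
theorem conv_welldef {ι : Type*} [Fintype ι] (X : List (ZLat ι))
    (hX0 : ∀ a ∈ X, a ≠ 0) (hspan : spanOf X = ⊤)
    (r : Submodule ℝ (Amb ι)) (hr : IsRational X r) (u : Amb ι) (hu : Reg X r u) :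
    ∀ γ : ZLat ι, Set.Finite {p : ZLat ι × ZLat ι |
      p.1 ∈ Function.support (PF X r u) ∧ castV p.2 ∈ r ∧ γ = p.1 + p.2} := by
  intro γ
  have hpos : ∀ i : Fin (signedOut X r u).length,
      0 < phiH u ((signedOut X r u).get i) :=
    fun i => phiH_pos X r u hu _ (List.get_mem _ i)
  set c : ℝ := phiH u γ + phiH u ((negPart X r u).sum) with hc
  have hSfin : Set.Finite {k : Fin (signedOut X r u).length → ℕ |
      ∀ i, (k i : ℝ) * phiH u ((signedOut X r u).get i) ≤ c} := by
    have hpi : (Set.pi Set.univ (fun i : Fin (signedOut X r u).length =>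
        Set.Iic (Nat.floor (c / phiH u ((signedOut X r u).get i))))).Finite :=
      Set.Finite.pi (fun i => Set.finite_Iic _)
    refine Set.Finite.subset hpi ?_
    intro k hk
    simp only [Set.mem_pi, Set.mem_univ, Set.mem_Iic, forall_true_left]
    intro i
    exact Nat.le_floor ((le_div_iff₀ (hpos i)).mpr (hk i))
  refine Set.Finite.subset (((hSfin.image
    (fun k => (∑ i, (k i : ℤ) • (signedOut X r u).get i) - (negPart X r u).sum)).image
    (fun l => (l, γ - l)))) ?_
  rintro ⟨p1, p2⟩ ⟨hp1, hp2, hp3⟩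
  have hpart : partFn (signedOut X r u) (p1 + (negPart X r u).sum) ≠ 0 := by
    intro h
    apply hp1
    simp [PF, h]
  have hnz : Nat.card {k : Fin (signedOut X r u).length → ℕ //
      ∑ i, (k i : ℤ) • (signedOut X r u).get i = p1 + (negPart X r u).sum} ≠ 0 := by
    intro h
    exact hpart (by rw [partFn, h, Int.natCast_zero])
  obtain ⟨⟨k, hk⟩⟩ := (Nat.card_ne_zero.mp hnz).1
  have hμ : phiH u p2 = 0 := by rw [phiH_eq]; exact hu.1 _ hp2
  have hp1γ : phiH u p1 = phiH u γ := by
    rw [hp3, map_add, hμ, add_zero]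
  have hsum : ∑ i, (k i : ℝ) * phiH u ((signedOut X r u).get i) = c := by
    rw [← phiH_sum, hk, map_add, hp1γ, hc]
  have hkS : ∀ i, (k i : ℝ) * phiH u ((signedOut X r u).get i) ≤ c := by
    intro i
    rw [← hsum]
    exact Finset.single_le_sum
      (fun j _ => mul_nonneg (Nat.cast_nonneg _) (hpos j).le) (Finset.mem_univ i)
  refine ⟨p1, ⟨k, hkS, by simp only [hk, add_sub_cancel_right]⟩, ?_⟩
  have : p2 = γ - p1 := by rw [hp3]; ring
  rw [this]
end
end

section
/- For rational subspaces r and t, and a regular face F for X\r, one has ∇_{(X\t)\r} P_{X\r}^{F} = P_{(X\r)∩t}^{F}, where on the right F denotes the induced regular face for (X∩t)\r. -/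
open Function

attribute [local instance] Classical.propDecidable

noncomputable section

variable {ι : Type*} [Fintype ι]

set_option linter.unusedSectionVars false in
def repsF (n : ℕ) (v : Fin n → ZLat ι) (γ : ZLat ι) :=
  {k : Fin n → ℕ // ∑ i, (k i : ℤ) • v i = γ}

def reps (Y : List (ZLat ι)) (γ : ZLat ι) := repsF Y.length Y.get γ

lemma partFn_eq (Y : List (ZLat ι)) (γ : ZLat ι) : partFn Y γ = Nat.card (reps Y γ) := rfl

def repsFsucc (n : ℕ) (v : Fin (n + 1) → ZLat ι) (γ : ZLat ι) :
    repsF (n + 1) v γ ≃ Σ m : ℕ, repsF n (v ∘ Fin.succ) (γ - (m : ℤ) • v 0) where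
  toFun k := ⟨k.1 0, ⟨fun i => k.1 i.succ, by
    have h := k.2
    rw [Fin.sum_univ_succ] at h
    rw [eq_sub_iff_add_eq, add_comm]
    exact h⟩⟩
  invFun x := ⟨Fin.cons x.1 x.2.1, by
    rw [Fin.sum_univ_succ]
    simp only [Fin.cons_zero, Fin.cons_succ]
    have := x.2.2
    simp only [comp_apply] at this
    rw [this]; abel⟩
  left_inv k := by
    apply Subtype.ext
    exact funext fun i => Fin.cases rfl (fun j => rfl) i
  right_inv x := by
    rcases x with ⟨m, k, hk⟩
    rfl

def repsCons (a : ZLat ι) (Y : List (ZLat ι)) (γ : ZLat ι) :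
    reps (a :: Y) γ ≃ Σ m : ℕ, reps Y (γ - (m : ℤ) • a) :=
  repsFsucc Y.length (a :: Y).get γ

/-- `γ ↦ dotR u (castV γ)` as an additive hom. -/
def dotCastHom (u : Amb ι) : ZLat ι →+ ℝ where
  toFun x := dotR u (castV x)
  map_zero' := by simp [dotR, castV]
  map_add' x y := by
    simp [dotR, castV, mul_add, Finset.sum_add_distrib]

lemma dotCast_zsmul (u : Amb ι) (n : ℤ) (x : ZLat ι) :
    dotR u (castV (n • x)) = n * dotR u (castV x) := by
  have := map_zsmul (dotCastHom u) n x
  rw [← zsmul_eq_mul]; exact this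

lemma repsF_finite (n : ℕ) (v : Fin n → ZLat ι) (u : Amb ι)
    (hpos : ∀ i, 0 < dotR u (castV (v i))) (γ : ZLat ι) : Finite (repsF n v γ) := by
  set D := dotR u (castV γ) with hD
  have key : ∀ (k : repsF n v γ) (j : Fin n), (k.1 j : ℝ) ≤ D / dotR u (castV (v j)) := by
    rintro ⟨k, hk⟩ j
    rw [le_div_iff₀ (hpos j)]
    have h1 : D = ∑ i, (k i : ℝ) * dotR u (castV (v i)) := by
      rw [hD, ← hk]
      show (dotCastHom u) (∑ i, (k i : ℤ) • v i) = _
      rw [map_sum]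
      congr 1; funext i
      have := dotCast_zsmul u (k i : ℤ) (v i)
      show dotR u (castV (((k i : ℕ) : ℤ) • v i)) = _
      simpa using this
    rw [h1]
    exact Finset.single_le_sum (f := fun i => (k i : ℝ) * dotR u (castV (v i)))
      (fun i _ => mul_nonneg (by positivity) (hpos i).le) (Finset.mem_univ j)
  have : Function.Injective (fun (k : repsF n v γ) =>
      (fun j => (⟨k.1 j, by
        have := key k j
        have h2 : (k.1 j : ℕ) ≤ ⌈D / dotR u (castV (v j))⌉₊ := by
          calc (k.1 j : ℕ) = ⌈((k.1 j : ℕ) : ℝ)⌉₊ := by simp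
          _ ≤ ⌈D / dotR u (castV (v j))⌉₊ := Nat.ceil_mono this
        omega⟩ : Fin (⌈D / dotR u (castV (v j))⌉₊ + 1)) : ∀ j, Fin _)) := by
    intro k l h
    apply Subtype.ext
    funext j
    have := congrFun h j
    simpa [Fin.ext_iff] using this
  exact Finite.of_injective _ this

/-- Split a sigma over `ℕ` at zero. -/
def sigmaNatSplit (F : ℕ → Type*) : (Σ n : ℕ, F n) ≃ F 0 ⊕ (Σ n : ℕ, F (n + 1)) where
  toFun x := match x with
    | ⟨0, y⟩ => Sum.inl y
    | ⟨n + 1, y⟩ => Sum.inr ⟨n, y⟩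
  invFun x := match x with
    | Sum.inl y => ⟨0, y⟩
    | Sum.inr ⟨n, y⟩ => ⟨n + 1, y⟩
  left_inv x := by rcases x with ⟨(_ | n), y⟩ <;> rfl
  right_inv x := by rcases x with (y | ⟨n, y⟩) <;> rfl

/-- The peeling lemma: `∇ₐ` of the partition function of `a :: Y`. -/
lemma partFn_peel (a : ZLat ι) (Y : List (ZLat ι)) (u : Amb ι)
    (hpos : ∀ b ∈ a :: Y, 0 < dotR u (castV b)) (γ : ZLat ι) :
    partFn (a :: Y) γ - partFn (a :: Y) (γ - a) = partFn Y γ := by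
  have hfin : ∀ δ, Finite (reps (a :: Y) δ) := fun δ => by
    apply repsF_finite _ _ u
    intro i
    exact hpos _ (List.get_mem _ _)
  have hfinY : ∀ δ, Finite (reps Y δ) := fun δ => by
    apply repsF_finite _ _ u
    intro i
    exact hpos _ (List.mem_cons_of_mem _ (List.get_mem _ _))
  -- reps (a::Y) γ ≃ reps Y γ ⊕ reps (a::Y) (γ - a)
  have e2 : reps (a :: Y) (γ - a) ≃ Σ m : ℕ, reps Y (γ - ((m : ℤ) + 1) • a) :=
    (repsCons a Y (γ - a)).trans (Equiv.sigmaCongrRight fun m =>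
      Equiv.cast (by congr 1; push_cast; rw [add_smul]; abel))
  have e : reps (a :: Y) γ ≃ reps Y γ ⊕ reps (a :: Y) (γ - a) :=
    (repsCons a Y γ).trans ((sigmaNatSplit fun m => reps Y (γ - (m : ℤ) • a)).trans
      (Equiv.sumCongr (Equiv.cast (by norm_num)) (e2.symm.trans (Equiv.refl _)).symm.symm))
  have hfin2 : Finite (reps Y γ ⊕ reps (a :: Y) (γ - a)) := by
    have := hfinY γ; have := hfin (γ - a); infer_instance
  rw [partFn_eq, partFn_eq, partFn_eq, Nat.card_congr e, Nat.card_sum]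
  push_cast
  ring

def sigmaSwap {F : ℕ → ℕ → Type*} : (Σ m : ℕ, Σ l : ℕ, F m l) ≃ (Σ l : ℕ, Σ m : ℕ, F m l) where
  toFun x := ⟨x.2.1, x.1, x.2.2⟩
  invFun x := ⟨x.2.1, x.1, x.2.2⟩
  left_inv x := rfl
  right_inv x := rfl

lemma reps_perm {Y Z : List (ZLat ι)} (h : Y.Perm Z) (γ : ZLat ι) :
    Nonempty (reps Y γ ≃ reps Z γ) := by
  induction h generalizing γ with
  | nil => exact ⟨Equiv.refl _⟩
  | cons a h ih =>
    exact ⟨(repsCons a _ γ).trans ((Equiv.sigmaCongrRight fun m =>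
      (ih _).some).trans (repsCons a _ γ).symm)⟩
  | swap a b Y =>
    refine ⟨(repsCons b _ γ).trans (((Equiv.sigmaCongrRight fun m =>
      repsCons a _ _).trans (sigmaSwap.trans (Equiv.sigmaCongrRight fun l =>
        (Equiv.sigmaCongrRight fun m => Equiv.cast (by rw [sub_sub, sub_sub, add_comm])).trans
        (repsCons b _ _).symm))).trans (repsCons a _ γ).symm)⟩
  | trans h1 h2 ih1 ih2 =>
    exact ⟨((ih1 γ).some).trans ((ih2 γ).some)⟩

lemma partFn_perm {Y Z : List (ZLat ι)} (h : Y.Perm Z) : partFn Y = partFn Z := by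
  funext γ
  rw [partFn_eq, partFn_eq, Nat.card_congr (reps_perm h γ).some]

def negL (u : Amb ι) (L : List (ZLat ι)) : List (ZLat ι) :=
  L.filter (fun a => decide (dotR u (castV a) < 0))
def sgnL (u : Amb ι) (L : List (ZLat ι)) : List (ZLat ι) :=
  L.map (fun a => if 0 < dotR u (castV a) then a else -a)
def Q (u : Amb ι) (L : List (ZLat ι)) : ZLat ι → ℤ :=
  fun γ => (-1) ^ (negL u L).length * partFn (sgnL u L) (γ + (negL u L).sum)

lemma castV_neg (a : ZLat ι) : castV (-a) = -castV a := by
  funext i; simp [castV]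

lemma sgnL_pos (u : Amb ι) (L : List (ZLat ι)) (h : ∀ a ∈ L, dotR u (castV a) ≠ 0) :
    ∀ b ∈ sgnL u L, 0 < dotR u (castV b) := by
  intro b hb
  rw [sgnL, List.mem_map] at hb
  obtain ⟨a, ha, rfl⟩ := hb
  by_cases hpos : 0 < dotR u (castV a)
  · simpa [hpos] using hpos
  · have : dotR u (castV a) < 0 := lt_of_le_of_ne (not_lt.mp hpos) (h a ha)
    simp only [hpos, if_false]
    rw [castV_neg]
    have : dotR u (-castV a) = -dotR u (castV a) := by
      simp [dotR, Finset.sum_neg_distrib, mul_neg]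
    rw [this]
    linarith

lemma Q_perm (u : Amb ι) {L L' : List (ZLat ι)} (h : L.Perm L') : Q u L = Q u L' := by
  funext γ
  have h1 : (negL u L).Perm (negL u L') := h.filter _
  have h2 : (sgnL u L).Perm (sgnL u L') := h.map _
  rw [Q, Q, h1.length_eq, h1.sum_eq, partFn_perm h2]

/-- Key step: peeling one element off `Q`. -/
lemma nab_Q_cons (u : Amb ι) (a : ZLat ι) (L : List (ZLat ι))
    (ha : dotR u (castV a) ≠ 0) (hL : ∀ b ∈ L, dotR u (castV b) ≠ 0) :
    nab a (Q u (a :: L)) = Q u L := by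
  funext γ
  have hneg : dotR u (castV (-a)) = -dotR u (castV a) := by
    rw [castV_neg]; simp [dotR, mul_neg]
  by_cases hpos : 0 < dotR u (castV a)
  · have h1 : negL u (a :: L) = negL u L := by
      rw [negL, List.filter_cons]
      simp only [decide_eq_true_eq, if_neg (asymm hpos)]
      rfl
    have h2 : sgnL u (a :: L) = a :: sgnL u L := by
      rw [sgnL, List.map_cons, if_pos hpos]
      rfl
    have hp : ∀ b ∈ a :: sgnL u L, 0 < dotR u (castV b) := by
      intro b hb
      rcases List.mem_cons.mp hb with rfl | hb
      · exact hpos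
      · exact sgnL_pos u L hL b hb
    rw [nab]
    simp only [Q, h1, h2]
    rw [← mul_sub]
    congr 1
    have := partFn_peel a (sgnL u L) u hp (γ + (negL u L).sum)
    rw [← this]
    congr 2
    abel
  · have hneg' : dotR u (castV a) < 0 := lt_of_le_of_ne (not_lt.mp hpos) ha
    have h1 : negL u (a :: L) = a :: negL u L := by
      rw [negL, List.filter_cons, if_pos (by simpa using hneg')]
      rfl
    have h2 : sgnL u (a :: L) = (-a) :: sgnL u L := by
      rw [sgnL, List.map_cons, if_neg hpos]
      rfl
    have hp : ∀ b ∈ (-a) :: sgnL u L, 0 < dotR u (castV b) := by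
      intro b hb
      rcases List.mem_cons.mp hb with rfl | hb
      · rw [hneg]; linarith
      · exact sgnL_pos u L hL b hb
    rw [nab]
    simp only [Q, h1, h2, List.length_cons, List.sum_cons]
    have key := partFn_peel (-a) (sgnL u L) u hp (γ + (negL u L).sum)
    have e1 : γ + (a + (negL u L).sum) = (γ + (negL u L).sum) - (-a) := by abel
    have e2 : γ - a + (a + (negL u L).sum) = γ + (negL u L).sum := by abel
    rw [e1, e2, pow_succ]
    have : partFn ((-a) :: sgnL u L) (γ + (negL u L).sum - -a)
        = partFn ((-a) :: sgnL u L) (γ + (negL u L).sum) - partFn (sgnL u L) (γ + (negL u L).sum) := by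
      linarith [key]
    rw [this]
    ring

lemma nabL_nab_comm (M : List (ZLat ι)) (a : ZLat ι) (f : ZLat ι → ℤ) :
    nabL M (nab a f) = nab a (nabL M f) := by
  induction M with
  | nil => rfl
  | cons b M ih =>
    show nab b (nabL M (nab a f)) = nab a (nab b (nabL M f))
    rw [ih, nab_comm]

lemma nabL_Q_append (u : Amb ι) (M L : List (ZLat ι))
    (hM : ∀ a ∈ M, dotR u (castV a) ≠ 0) (hL : ∀ a ∈ L, dotR u (castV a) ≠ 0) :
    nabL M (Q u (M ++ L)) = Q u L := by
  induction M with
  | nil => rfl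
  | cons a M ih =>
    have hM' : ∀ b ∈ M, dotR u (castV b) ≠ 0 := fun b hb => hM b (List.mem_cons_of_mem _ hb)
    have hML : ∀ b ∈ M ++ L, dotR u (castV b) ≠ 0 := by
      intro b hb
      rcases List.mem_append.mp hb with hb | hb
      · exact hM' b hb
      · exact hL b hb
    show nab a (nabL M (Q u (a :: (M ++ L)))) = Q u L
    rw [← nabL_nab_comm, nab_Q_cons u a (M ++ L) (hM a List.mem_cons_self) hML, ih hM']

/-- `∇_{(X\t)\r} 𝓟_{X\r}^F = 𝓟_{(X\r)∩t}^F`, the latter for the induced regular face of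
`(X ∩ t) \ r`. -/
theorem nab_PF_restrict {ι : Type*} [Fintype ι] (X : List (ZLat ι))
    (hX0 : ∀ a ∈ X, a ≠ 0) (hspan : spanOf X = ⊤)
    (r t : Submodule ℝ (Amb ι)) (hr : IsRational X r) (ht : IsRational X t)
    (u : Amb ι) (hu : Reg X r u) :
    nabL (outSub (outSub X t) r) (PF X r u) = PF (inSub X t) r u := by
  have hPF : PF X r u = Q u (outSub X r) := rfl
  have hPF2 : PF (inSub X t) r u = Q u (outSub (inSub X t) r) := rfl
  have h1 : outSub (outSub X t) r = (outSub X r).filter (fun a => decide (castV a ∉ t)) := by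
    rw [outSub, outSub, outSub, List.filter_filter, List.filter_filter]
    exact List.filter_congr fun x _ => Bool.and_comm _ _
  have h2 : outSub (inSub X t) r = (outSub X r).filter (fun a => decide (castV a ∈ t)) := by
    rw [outSub, outSub, inSub, List.filter_filter, List.filter_filter]
    exact List.filter_congr fun x _ => Bool.and_comm _ _
  have h3 : ((outSub X r).filter (fun a => decide (castV a ∈ t)))
      = (outSub X r).filter (fun x => !(fun a => decide (castV a ∉ t)) x) := by
    refine List.filter_congr fun x _ => ?_
    simp [decide_not]
  have hperm : (outSub X r).Perm (outSub (outSub X t) r ++ outSub (inSub X t) r) := by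
    rw [h1, h2, h3]
    exact (List.filter_append_perm _ _).symm
  have hdot : ∀ a ∈ outSub X r, dotR u (castV a) ≠ 0 := by
    intro a ha
    rw [outSub, List.mem_filter] at ha
    exact hu.2 a ha.1 (by simpa using ha.2)
  rw [hPF, hPF2, Q_perm u hperm, h2]
  exact nabL_Q_append u _ _
    (fun a ha => hdot a (by rw [h1] at ha; exact (List.mem_filter.mp ha).1))
    (fun a ha => hdot a ((List.mem_filter.mp ha).1))
end
end

section
/- For rational subspaces r, t, a regular face F for X\r, and any function g supported on Γ ∩ r, the identity ∇_{X\t}(P_{X\r}^{F} * g) = P_{(X\r)∩t}^{F} * (∇_{(X∩r)\(t∩r)} g) holds. -/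
open Function

attribute [local instance] Classical.propDecidable

noncomputable section

variable {ι : Type*} [Fintype ι]

namespace MotherAux

variable {ι : Type*} [Fintype ι]

/-- Pairing with `u` as an additive hom on the lattice. -/
def dotZ (u : Amb ι) : ZLat ι →+ ℝ where
  toFun a := dotR u (castV a)
  map_zero' := by simp [dotR, castV]
  map_add' a b := by
    simp only [dotR, castV, Pi.add_apply, Int.cast_add, ← Finset.sum_add_distrib]
    exact Finset.sum_congr rfl fun i _ => by ring

lemma dotZ_apply (u : Amb ι) (a : ZLat ι) : dotZ u a = dotR u (castV a) := rfl

lemma dotZ_zsmul (u : Amb ι) (n : ℤ) (a : ZLat ι) : dotZ u (n • a) = n * dotZ u a := by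
  rw [map_zsmul, zsmul_eq_mul]

lemma box_finite {n : ℕ} (c : Fin n → ℝ) (hc : ∀ i, 0 < c i) (s : ℝ) :
    {k : Fin n → ℕ | (∑ i, (k i : ℝ) * c i) = s}.Finite := by
  apply Set.Finite.subset (Set.Finite.pi (fun i : Fin n => Set.finite_Iic (⌈s / c i⌉₊)))
  intro k hk
  simp only [Set.mem_setOf_eq] at hk
  simp only [Set.mem_pi, Set.mem_univ, Set.mem_Iic, forall_true_left]
  intro i
  have h1 : (k i : ℝ) * c i ≤ s := by
    rw [← hk]
    exact Finset.single_le_sum (f := fun j => (k j : ℝ) * c j)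
      (fun j _ => mul_nonneg (Nat.cast_nonneg _) (hc j).le) (Finset.mem_univ i)
  have h2 : (k i : ℝ) ≤ s / c i := (le_div_iff₀ (hc i)).2 h1
  exact_mod_cast h2.trans (Nat.le_ceil _)

lemma dotZ_combo (u : Amb ι) (Y : List (ZLat ι)) (k : Fin Y.length → ℕ) :
    dotZ u (∑ i, (k i : ℤ) • Y.get i) = ∑ i, (k i : ℝ) * dotZ u (Y.get i) := by
  rw [map_sum]
  exact Finset.sum_congr rfl fun i _ => by rw [dotZ_zsmul]; push_cast; ring

lemma reps_setFinite (u : Amb ι) (Y : List (ZLat ι)) (hY : ∀ a ∈ Y, 0 < dotZ u a) (s : ℝ) :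
    {k : Fin Y.length → ℕ | dotZ u (∑ i, (k i : ℤ) • Y.get i) = s}.Finite := by
  apply Set.Finite.subset (box_finite (fun i => dotZ u (Y.get i))
    (fun i => hY _ (Y.get_mem i)) s)
  intro k hk
  simp only [Set.mem_setOf_eq] at *
  rw [← dotZ_combo]; exact hk

lemma reps_finite (u : Amb ι) (Y : List (ZLat ι)) (hY : ∀ a ∈ Y, 0 < dotZ u a) (γ : ZLat ι) :
    Finite {k : Fin Y.length → ℕ // ∑ i, (k i : ℤ) • Y.get i = γ} := by
  have h : {k : Fin Y.length → ℕ | ∑ i, (k i : ℤ) • Y.get i = γ}.Finite := by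
    apply Set.Finite.subset (reps_setFinite u Y hY (dotZ u γ))
    intro k hk
    simp only [Set.mem_setOf_eq] at *
    rw [hk]
  exact h.to_subtype

end MotherAux
namespace MotherAux

variable {ι : Type*} [Fintype ι]

lemma sum_cons_split (v : ZLat ι) (Z : List (ZLat ι)) (k : Fin (Z.length + 1) → ℕ) :
    ∑ i, (k i : ℤ) • (v :: Z).get i = (k 0 : ℤ) • v + ∑ i, (k i.succ : ℤ) • Z.get i := by
  rw [Fin.sum_univ_succ]
  rfl

/-- Splitting representations of `γ` by `v :: Z` according to the first coefficient. -/
def splitEquiv (v : ZLat ι) (Z : List (ZLat ι)) (γ : ZLat ι) :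
    {k : Fin (Z.length + 1) → ℕ // ∑ i, (k i : ℤ) • (v :: Z).get i = γ} ≃
      ({k : Fin Z.length → ℕ // ∑ i, (k i : ℤ) • Z.get i = γ} ⊕
       {k : Fin (Z.length + 1) → ℕ // ∑ i, (k i : ℤ) • (v :: Z).get i = γ - v}) where
  toFun x :=
    if h : x.1 0 = 0 then
      Sum.inl ⟨Fin.tail x.1, by
        have hk := x.2
        rw [sum_cons_split, h] at hk
        simpa [Fin.tail] using hk⟩
    else
      Sum.inr ⟨Fin.cons (x.1 0 - 1) (Fin.tail x.1), by
        have hk := x.2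
        rw [sum_cons_split] at hk ⊢
        simp only [Fin.cons_zero, Fin.cons_succ]
        have hc : ((x.1 0 - 1 : ℕ) : ℤ) = (x.1 0 : ℤ) - 1 := by
          have := Nat.one_le_iff_ne_zero.2 h
          push_cast [Nat.cast_sub this]
          ring
        rw [hc, sub_smul, one_smul, sub_add_eq_add_sub]
        congr 1⟩
  invFun x :=
    match x with
    | Sum.inl ⟨k, hk⟩ => ⟨Fin.cons 0 k, by
        rw [sum_cons_split]
        simp only [Fin.cons_zero, Fin.cons_succ]
        simpa using hk⟩
    | Sum.inr ⟨k, hk⟩ => ⟨Fin.cons (k 0 + 1) (Fin.tail k), by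
        rw [sum_cons_split]
        simp only [Fin.cons_zero, Fin.cons_succ]
        rw [sum_cons_split] at hk
        push_cast
        rw [add_smul, one_smul]
        show (k 0 : ℤ) • v + v + ∑ i, (Fin.tail k i : ℤ) • Z.get i = γ
        simp only [Fin.tail]
        rw [add_right_comm]
        rw [show (k 0 : ℤ) • v + ∑ i, (k i.succ : ℤ) • Z.get i = γ - v from hk]
        abel⟩
  left_inv := by
    rintro ⟨k, hk⟩
    by_cases h : k 0 = 0
    · simp only [h, dif_pos]
      apply Subtype.ext
      simp only
      funext i
      refine Fin.cases ?_ ?_ i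
      · simp [h]
      · intro j; simp [Fin.tail]
    · simp only [h, dif_neg, not_false_iff]
      apply Subtype.ext
      simp only
      funext i
      refine Fin.cases ?_ ?_ i
      · simp only [Fin.cons_zero]
        omega
      · intro j; simp [Fin.tail]
  right_inv := by
    rintro (⟨k, hk⟩ | ⟨k, hk⟩)
    · have h0 : (Fin.cons 0 k : Fin (Z.length + 1) → ℕ) 0 = 0 := rfl
      simp only [h0, dif_pos]
      congr 1
    · have h0 : (Fin.cons (k 0 + 1) (Fin.tail k) : Fin (Z.length + 1) → ℕ) 0 = k 0 + 1 := rfl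
      simp only [h0, dif_neg, Nat.succ_ne_zero, not_false_iff]
      congr 1
      apply Subtype.ext
      funext i
      refine Fin.cases ?_ ?_ i
      · simp
      · intro j; simp [Fin.tail]

lemma partFn_cons (u : Amb ι) (v : ZLat ι) (Z : List (ZLat ι)) (hv : 0 < dotZ u v)
    (hZ : ∀ a ∈ Z, 0 < dotZ u a) (γ : ZLat ι) :
    partFn (v :: Z) γ = partFn Z γ + partFn (v :: Z) (γ - v) := by
  have hvZ : ∀ a ∈ v :: Z, 0 < dotZ u a := by
    intro a ha
    rcases List.mem_cons.1 ha with rfl | h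
    · exact hv
    · exact hZ a h
  have F2 : Finite {k : Fin Z.length → ℕ // ∑ i, (k i : ℤ) • Z.get i = γ} :=
    reps_finite u Z hZ γ
  have F3 : Finite {k : Fin (Z.length + 1) → ℕ // ∑ i, (k i : ℤ) • (v :: Z).get i = γ - v} :=
    reps_finite u (v :: Z) hvZ (γ - v)
  have e : Nat.card {k : Fin (Z.length + 1) → ℕ // ∑ i, (k i : ℤ) • (v :: Z).get i = γ} =
      Nat.card {k : Fin Z.length → ℕ // ∑ i, (k i : ℤ) • Z.get i = γ} +
      Nat.card {k : Fin (Z.length + 1) → ℕ // ∑ i, (k i : ℤ) • (v :: Z).get i = γ - v} := by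
    rw [Nat.card_congr (splitEquiv v Z γ), Nat.card_sum]
  unfold partFn
  exact_mod_cast e

end MotherAux
namespace MotherAux

set_option linter.unusedSectionVars false

variable {ι : Type*} [Fintype ι]

lemma perm_get_equiv {α : Type*} {l₁ l₂ : List α} (h : l₁.Perm l₂) :
    ∃ σ : Fin l₁.length ≃ Fin l₂.length, ∀ i, l₁.get i = l₂.get (σ i) := by
  induction h with
  | nil => exact ⟨Equiv.refl _, fun i => rfl⟩
  | cons x h ih =>
    obtain ⟨σ, hσ⟩ := ih
    refine ⟨(finSuccEquiv _).trans ((Equiv.optionCongr σ).trans (finSuccEquiv _).symm), ?_⟩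
    intro i
    refine Fin.cases ?_ ?_ i
    · simp
    · intro j
      simpa using hσ j
  | swap x y l =>
    refine ⟨Equiv.swap ⟨0, Nat.succ_pos _⟩ ⟨1, Nat.succ_lt_succ (Nat.succ_pos _)⟩, ?_⟩
    intro i
    rcases i with ⟨n, hn⟩
    match n with
    | 0 => rfl
    | 1 => rfl
    | n + 2 => rfl
  | trans h₁ h₂ ih₁ ih₂ =>
    obtain ⟨σ₁, hσ₁⟩ := ih₁
    obtain ⟨σ₂, hσ₂⟩ := ih₂
    exact ⟨σ₁.trans σ₂, fun i => (hσ₁ i).trans (hσ₂ _)⟩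

lemma partFn_perm {Y₁ Y₂ : List (ZLat ι)} (h : Y₁.Perm Y₂) : partFn Y₁ = partFn Y₂ := by
  funext γ
  obtain ⟨σ, hσ⟩ := perm_get_equiv h
  unfold partFn
  congr 1
  apply Nat.card_congr
  refine ⟨fun x => ⟨x.1 ∘ σ.symm, ?_⟩, fun x => ⟨x.1 ∘ σ, ?_⟩, fun x => ?_, fun x => ?_⟩
  · have e1 : ∑ j, (x.1 j : ℤ) • Y₁.get j = ∑ i, ((x.1 ∘ σ.symm) i : ℤ) • Y₂.get i :=
      Fintype.sum_equiv σ (fun j => (x.1 j : ℤ) • Y₁.get j)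
        (fun i => ((x.1 ∘ σ.symm) i : ℤ) • Y₂.get i)
        (fun j => by dsimp only [Function.comp_apply]; rw [Equiv.symm_apply_apply, hσ j])
    exact e1.symm.trans x.2
  · have e2 : ∑ j, ((x.1 ∘ σ) j : ℤ) • Y₁.get j = ∑ i, (x.1 i : ℤ) • Y₂.get i :=
      Fintype.sum_equiv σ (fun j => ((x.1 ∘ σ) j : ℤ) • Y₁.get j)
        (fun i => (x.1 i : ℤ) • Y₂.get i)
        (fun j => by dsimp only [Function.comp_apply]; rw [hσ j])
    exact e2.trans x.2
  · apply Subtype.ext; funext i; simp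
  · apply Subtype.ext; funext i; simp

lemma nab_comm (a b : ZLat ι) (f : ZLat ι → ℤ) : nab a (nab b f) = nab b (nab a f) := by
  funext γ
  simp only [nab]
  have : γ - a - b = γ - b - a := by abel
  rw [this]
  ring

lemma nabL_cons (a : ZLat ι) (L : List (ZLat ι)) (f : ZLat ι → ℤ) :
    nabL (a :: L) f = nab a (nabL L f) := rfl

lemma nabL_append (L₁ L₂ : List (ZLat ι)) (f : ZLat ι → ℤ) :
    nabL (L₁ ++ L₂) f = nabL L₁ (nabL L₂ f) := by
  simp [nabL, List.foldr_append]

lemma nab_nabL_comm (a : ZLat ι) (L : List (ZLat ι)) (f : ZLat ι → ℤ) :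
    nab a (nabL L f) = nabL L (nab a f) := by
  induction L with
  | nil => rfl
  | cons b L ih => rw [nabL_cons, nabL_cons, ← ih, nab_comm]

lemma nabL_perm {L₁ L₂ : List (ZLat ι)} (h : L₁.Perm L₂) (f : ZLat ι → ℤ) :
    nabL L₁ f = nabL L₂ f := by
  induction h with
  | nil => rfl
  | cons x h ih => rw [nabL_cons, nabL_cons, ih]
  | swap x y l => rw [nabL_cons, nabL_cons, nabL_cons, nabL_cons, nab_comm]
  | trans h₁ h₂ ih₁ ih₂ => rw [ih₁, ih₂]

end MotherAux
namespace MotherAux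

set_option linter.unusedSectionVars false

variable {ι : Type*} [Fintype ι]

/-- Sign normalization of a vector relative to `u`. -/
def sgn (u : Amb ι) (a : ZLat ι) : ZLat ι := if 0 < dotR u (castV a) then a else -a

/-- The abstract special function attached to a list. -/
def QQ (u : Amb ι) (M : List (ZLat ι)) : ZLat ι → ℤ := fun γ =>
  (-1) ^ (M.filter fun a => decide (dotR u (castV a) < 0)).length *
    partFn (M.map (sgn u)) (γ + (M.filter fun a => decide (dotR u (castV a) < 0)).sum)

lemma PF_eq_QQ (X : List (ZLat ι)) (r : Submodule ℝ (Amb ι)) (u : Amb ι) :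
    PF X r u = QQ u (outSub X r) := rfl

lemma dotZ_neg' (u : Amb ι) (a : ZLat ι) : dotZ u (-a) = -dotZ u a := map_neg _ _

lemma dotZ_sgn_pos (u : Amb ι) (a : ZLat ι) (ha : dotZ u a ≠ 0) : 0 < dotZ u (sgn u a) := by
  unfold sgn
  by_cases h : 0 < dotR u (castV a)
  · rw [if_pos h]; exact h
  · rw [if_neg h, dotZ_neg']
    rw [dotZ_apply] at ha ⊢
    cases lt_or_gt_of_ne ha with
    | inl h' => linarith
    | inr h' => exact absurd h' h

lemma dotZ_map_sgn_pos (u : Amb ι) (M : List (ZLat ι)) (hM : ∀ b ∈ M, dotZ u b ≠ 0) :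
    ∀ a ∈ M.map (sgn u), 0 < dotZ u a := by
  intro a ha
  obtain ⟨b, hb, rfl⟩ := List.mem_map.1 ha
  exact dotZ_sgn_pos u b (hM b hb)

/-- Key step: applying `∇ₐ` removes the head entry of the special function. -/
lemma nab_QQ (u : Amb ι) (a : ZLat ι) (M : List (ZLat ι)) (ha : dotZ u a ≠ 0)
    (hM : ∀ b ∈ M, dotZ u b ≠ 0) : nab a (QQ u (a :: M)) = QQ u M := by
  have hpos := dotZ_map_sgn_pos u M hM
  funext γ
  by_cases h : 0 < dotR u (castV a)
  · have hfilter : ((a :: M).filter fun b => decide (dotR u (castV b) < 0)) =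
        (M.filter fun b => decide (dotR u (castV b) < 0)) := by
      rw [List.filter_cons]
      simp [not_lt.2 h.le, asymm h]
    have hmap : (a :: M).map (sgn u) = a :: M.map (sgn u) := by
      simp [sgn, if_pos h]
    have key := partFn_cons u a (M.map (sgn u)) (by rwa [dotZ_apply]) hpos
    simp only [nab, QQ, hfilter, hmap]
    set σ := (M.filter fun b => decide (dotR u (castV b) < 0)).sum
    have e1 : γ - a + σ = γ + σ - a := by abel
    rw [e1, key (γ + σ)]
    ring
  · have hneg : dotR u (castV a) < 0 := by
      rw [dotZ_apply] at ha
      cases lt_or_gt_of_ne ha with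
      | inl h' => exact h'
      | inr h' => exact absurd h' h
    have hfilter : ((a :: M).filter fun b => decide (dotR u (castV b) < 0)) =
        a :: (M.filter fun b => decide (dotR u (castV b) < 0)) := by
      rw [List.filter_cons]
      simp [hneg]
    have hmap : (a :: M).map (sgn u) = (-a) :: M.map (sgn u) := by
      simp [sgn, if_neg h]
    have hnega : 0 < dotZ u (-a) := by
      rw [dotZ_neg', dotZ_apply]; linarith
    have key := partFn_cons u (-a) (M.map (sgn u)) hnega hpos
    simp only [nab, QQ, hfilter, hmap, List.sum_cons, List.length_cons]
    set σ := (M.filter fun b => decide (dotR u (castV b) < 0)).sum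
    have e1 : γ + (a + σ) = (γ + σ) - (-a) := by abel
    have e2 : γ - a + (a + σ) = γ + σ := by abel
    rw [e1, e2, key (γ + σ)]
    ring

lemma QQ_perm (u : Amb ι) {M₁ M₂ : List (ZLat ι)} (h : M₁.Perm M₂) : QQ u M₁ = QQ u M₂ := by
  have hf := h.filter (fun a => decide (dotR u (castV a) < 0))
  funext γ
  unfold QQ
  rw [hf.length_eq, hf.sum_eq, partFn_perm (h.map (sgn u))]

/-- Applying `∇` along a prefix list removes it from the special function. -/
lemma nabL_QQ (u : Amb ι) (L E : List (ZLat ι)) (hL : ∀ a ∈ L, dotZ u a ≠ 0)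
    (hE : ∀ a ∈ E, dotZ u a ≠ 0) : nabL L (QQ u (L ++ E)) = QQ u E := by
  induction L with
  | nil => rfl
  | cons a L ih =>
    have hL' : ∀ b ∈ L, dotZ u b ≠ 0 := fun b hb => hL b (List.mem_cons_of_mem _ hb)
    have hLE : ∀ b ∈ L ++ E, dotZ u b ≠ 0 := by
      intro b hb
      rcases List.mem_append.1 hb with h' | h'
      · exact hL' b h'
      · exact hE b h'
    rw [List.cons_append, nabL_cons, nab_nabL_comm, nab_QQ u a (L ++ E) (hL a List.mem_cons_self) hLE]
    exact ih hL'

end MotherAux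
namespace MotherAux

set_option linter.unusedSectionVars false

variable {ι : Type*} [Fintype ι]

/-- The convolution `f * g` has finitely supported summands. -/
def ConvFin (f g : ZLat ι → ℤ) : Prop :=
  ∀ γ, (Function.support fun μ => f (γ - μ) * g μ).Finite

lemma convFin_nab_left {f g : ZLat ι → ℤ} (h : ConvFin f g) (a : ZLat ι) :
    ConvFin (nab a f) g := by
  intro γ
  apply ((h γ).union (h (γ - a))).subset
  intro μ hμ
  simp only [Function.mem_support, nab] at hμ
  by_contra hc
  simp only [Set.mem_union, Function.mem_support, not_or, not_not] at hc
  apply hμ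
  rw [sub_right_comm γ μ a, sub_mul, hc.1, hc.2, sub_zero]

lemma convFin_nab_right {f g : ZLat ι → ℤ} (h : ConvFin f g) (a : ZLat ι) :
    ConvFin f (nab a g) := by
  intro γ
  apply ((h γ).union ((h (γ - a)).image (fun μ => μ + a))).subset
  intro μ hμ
  simp only [Function.mem_support, nab, mul_sub] at hμ
  have key : f (γ - μ) * g μ ≠ 0 ∨ f (γ - μ) * g (μ - a) ≠ 0 := by
    by_contra hc
    push_neg at hc
    rw [hc.1, hc.2, sub_zero] at hμ
    exact hμ rfl
  rcases key with h1 | h2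
  · exact Set.mem_union_left _ h1
  · refine Set.mem_union_right _ ⟨μ - a, ?_, by simp⟩
    have e : γ - a - (μ - a) = γ - μ := by abel
    exact Function.mem_support.mpr (by rw [e]; exact h2)

lemma nab_conv_left {f g : ZLat ι → ℤ} (h : ConvFin f g) (a : ZLat ι) :
    nab a (conv f g) = conv (nab a f) g := by
  funext γ
  show conv f g γ - conv f g (γ - a) = _
  unfold conv
  rw [← finsum_sub_distrib (h γ) (h (γ - a))]
  apply finsum_congr
  intro μ
  unfold nab
  rw [show γ - μ - a = γ - a - μ by abel]
  ring

lemma nab_conv_right {f g : ZLat ι → ℤ} (h : ConvFin f g) (a : ZLat ι) :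
    nab a (conv f g) = conv f (nab a g) := by
  funext γ
  show conv f g γ - conv f g (γ - a) = _
  unfold conv
  have h2 : (Function.support fun μ => f (γ - μ) * g (μ - a)).Finite := by
    apply ((h (γ - a)).image (fun μ => μ + a)).subset
    intro μ hμ
    simp only [Function.mem_support] at hμ
    refine ⟨μ - a, ?_, by show μ - a + a = μ; abel⟩
    simp only [Function.mem_support]
    rw [show γ - a - (μ - a) = γ - μ by abel]
    exact hμ
  have e2 : ∑ᶠ μ, f (γ - μ) * g (μ - a) = ∑ᶠ μ, f (γ - a - μ) * g μ := by
    rw [← finsum_comp_equiv (Equiv.addRight a) (f := fun μ => f (γ - μ) * g (μ - a))]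
    apply finsum_congr
    intro μ
    simp only [Equiv.coe_addRight]
    rw [show γ - (μ + a) = γ - a - μ by abel, add_sub_cancel_right]
  rw [← e2, ← finsum_sub_distrib (h γ) h2]
  apply finsum_congr
  intro μ
  unfold nab
  ring

lemma convFin_nabL_left {f g : ZLat ι → ℤ} (h : ConvFin f g) (L : List (ZLat ι)) :
    ConvFin (nabL L f) g := by
  induction L with
  | nil => exact h
  | cons a L ih => exact convFin_nab_left ih a

lemma nabL_conv_left {f g : ZLat ι → ℤ} (h : ConvFin f g) (L : List (ZLat ι)) :
    nabL L (conv f g) = conv (nabL L f) g := by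
  induction L with
  | nil => rfl
  | cons a L ih => rw [nabL_cons, ih, nab_conv_left (convFin_nabL_left h L) a, ← nabL_cons]

lemma convFin_nabL_right {f g : ZLat ι → ℤ} (h : ConvFin f g) (L : List (ZLat ι)) :
    ConvFin f (nabL L g) := by
  induction L with
  | nil => exact h
  | cons a L ih => exact convFin_nab_right ih a

lemma nabL_conv_right {f g : ZLat ι → ℤ} (h : ConvFin f g) (L : List (ZLat ι)) :
    nabL L (conv f g) = conv f (nabL L g) := by
  induction L with
  | nil => rfl
  | cons a L ih => rw [nabL_cons, ih, nab_conv_right (convFin_nabL_right h L) a, ← nabL_cons]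

end MotherAux
namespace MotherAux

set_option linter.unusedSectionVars false

variable {ι : Type*} [Fintype ι]

lemma filter_swap {α : Type*} (p q : α → Bool) (l : List α) :
    (l.filter p).filter q = (l.filter q).filter p := by
  induction l with
  | nil => rfl
  | cons a l ih => by_cases hp : p a <;> by_cases hq : q a <;>
      simp [List.filter_cons, hp, hq, ih]

lemma convFin_QQ (u : Amb ι) (M : List (ZLat ι)) (hM : ∀ a ∈ M, dotZ u a ≠ 0)
    (g : ZLat ι → ℤ) (hg : ∀ μ, g μ ≠ 0 → dotZ u μ = 0) : ConvFin (QQ u M) g := by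
  intro γ
  have hY : ∀ a ∈ M.map (sgn u), 0 < dotZ u a := dotZ_map_sgn_pos u M hM
  have hfin := (reps_setFinite u (M.map (sgn u)) hY
      (dotZ u (γ + (M.filter fun a => decide (dotR u (castV a) < 0)).sum))).image
      (fun k => γ + (M.filter fun a => decide (dotR u (castV a) < 0)).sum -
        ∑ i, (k i : ℤ) • (M.map (sgn u)).get i)
  apply hfin.subset
  intro μ hμ
  simp only [Function.mem_support] at hμ
  have h1 : QQ u M (γ - μ) ≠ 0 := left_ne_zero_of_mul hμ
  have h2 : g μ ≠ 0 := right_ne_zero_of_mul hμ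
  have h3 : partFn (M.map (sgn u))
      (γ - μ + (M.filter fun a => decide (dotR u (castV a) < 0)).sum) ≠ 0 := by
    intro h0
    apply h1
    unfold QQ
    rw [h0, mul_zero]
  have h4 : Nat.card {k : Fin (M.map (sgn u)).length → ℕ //
      ∑ i, (k i : ℤ) • (M.map (sgn u)).get i =
        γ - μ + (M.filter fun a => decide (dotR u (castV a) < 0)).sum} ≠ 0 := by
    intro h0
    apply h3
    unfold partFn
    rw [h0]
    rfl
  obtain ⟨k, hk⟩ := (Nat.card_ne_zero.1 h4).1
  refine ⟨k, ?_, ?_⟩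
  · simp only [Set.mem_setOf_eq]
    rw [hk, map_add, map_sub, hg μ h2, map_add]
    ring
  · dsimp only
    rw [hk]
    abel

end MotherAux


open MotherAux in
/-- The "mother formula": for `g` supported on `Γ ∩ r`,
`∇_{X\t}(𝓟_{X\r}^F * g) = 𝓟_{(X\r)∩t}^F * (∇_{(X∩r)\(t∩r)} g)`. -/
theorem mother_formula {ι : Type*} [Fintype ι] (X : List (ZLat ι))
    (hX0 : ∀ a ∈ X, a ≠ 0) (hspan : spanOf X = ⊤)
    (r t : Submodule ℝ (Amb ι)) (hr : IsRational X r) (ht : IsRational X t)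
    (u : Amb ι) (hu : Reg X r u)
    (g : ZLat ι → ℤ) (hg : Function.support g ⊆ {γ | castV γ ∈ r}) :
    nabOut X t (conv (PF X r u) g) =
      conv (PF (inSub X t) r u) (nabL (outSub (inSub X r) (t ⊓ r)) g) := by
  have hgu : ∀ μ, g μ ≠ 0 → dotZ u μ = 0 := fun μ hμ =>
    hu.1 (castV μ) (hg (Function.mem_support.mpr hμ))
  have hD : ∀ a ∈ outSub X r, dotZ u a ≠ 0 := by
    intro a ha
    obtain ⟨haX, hdec⟩ := List.mem_filter.1 ha
    exact hu.2 a haX (of_decide_eq_true hdec)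
  have hD' : ∀ a ∈ outSub (inSub X t) r, dotZ u a ≠ 0 := by
    intro a ha
    obtain ⟨hat, hdec⟩ := List.mem_filter.1 ha
    obtain ⟨haX, -⟩ := List.mem_filter.1 hat
    exact hu.2 a haX (of_decide_eq_true hdec)
  have hCF : ConvFin (PF X r u) g := by
    rw [PF_eq_QQ]; exact convFin_QQ u _ hD g hgu
  have hCF' : ConvFin (PF (inSub X t) r u) g := by
    rw [PF_eq_QQ]; exact convFin_QQ u _ hD' g hgu
  have hperm : (((outSub X t).filter (fun a => decide (castV a ∈ r))) ++
      ((outSub X t).filter (fun a => decide (castV a ∉ r)))).Perm (outSub X t) := by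
    have h1 := List.filter_append_perm (fun a : ZLat ι => decide (castV a ∈ r)) (outSub X t)
    have h2 : (fun a : ZLat ι => !decide (castV a ∈ r)) = fun a => decide (castV a ∉ r) := by
      funext a; simp [decide_not]
    rwa [h2] at h1
  have step1 : nabOut X t (conv (PF X r u) g) =
      nabL ((outSub X t).filter (fun a => decide (castV a ∈ r)))
        (nabL ((outSub X t).filter (fun a => decide (castV a ∉ r))) (conv (PF X r u) g)) := by
    rw [show nabOut X t (conv (PF X r u) g) = nabL (outSub X t) (conv (PF X r u) g) from rfl,
      ← nabL_append]
    exact (nabL_perm hperm _).symm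
  have e2 : (outSub X t).filter (fun a => decide (castV a ∉ r)) =
      (outSub X r).filter (fun a => decide (castV a ∉ t)) := by
    unfold outSub
    exact filter_swap _ _ X
  have e3 : (outSub X r).filter (fun a => decide (castV a ∈ t)) = outSub (inSub X t) r := by
    unfold outSub inSub
    exact filter_swap _ _ X
  have hpermD : (outSub X r).Perm ((outSub X r).filter (fun a => decide (castV a ∉ t)) ++
      (outSub X r).filter (fun a => decide (castV a ∈ t))) := by
    have h1 := List.filter_append_perm (fun a : ZLat ι => decide (castV a ∉ t)) (outSub X r)
    have h2 : (fun a : ZLat ι => !decide (castV a ∉ t)) = fun a => decide (castV a ∈ t) := by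
      funext a; simp [decide_not]
    rw [h2] at h1
    exact h1.symm
  have step2 : nabL ((outSub X r).filter (fun a => decide (castV a ∉ t))) (PF X r u) =
      PF (inSub X t) r u := by
    rw [PF_eq_QQ X r u, PF_eq_QQ (inSub X t) r u, QQ_perm u hpermD, ← e3]
    exact nabL_QQ u _ _ (fun a ha => hD a (List.mem_of_mem_filter ha))
      (fun a ha => hD a (List.mem_of_mem_filter ha))
  have step8 : outSub (inSub X r) (t ⊓ r) =
      (outSub X t).filter (fun a => decide (castV a ∈ r)) := by
    unfold outSub inSub
    have e : (X.filter (fun a => decide (castV a ∈ r))).filter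
        (fun a => decide (castV a ∉ t ⊓ r)) =
        (X.filter (fun a => decide (castV a ∈ r))).filter (fun a => decide (castV a ∉ t)) := by
      apply List.filter_congr
      intro a ha
      have har : castV a ∈ r := of_decide_eq_true (List.mem_filter.1 ha).2
      apply decide_eq_decide.2
      constructor
      · intro hnot hat; exact hnot (Submodule.mem_inf.2 ⟨hat, har⟩)
      · intro hnot hinf; exact hnot (Submodule.mem_inf.1 hinf).1
    rw [e]
    exact filter_swap _ _ X
  calc nabOut X t (conv (PF X r u) g)
      = nabL ((outSub X t).filter (fun a => decide (castV a ∈ r)))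
          (nabL ((outSub X r).filter (fun a => decide (castV a ∉ t)))
            (conv (PF X r u) g)) := by rw [step1, e2]
    _ = nabL ((outSub X t).filter (fun a => decide (castV a ∈ r)))
          (conv (PF (inSub X t) r u) g) := by
          rw [nabL_conv_left hCF, step2]
    _ = conv (PF (inSub X t) r u)
          (nabL ((outSub X t).filter (fun a => decide (castV a ∈ r))) g) := by
          rw [nabL_conv_right hCF']
    _ = conv (PF (inSub X t) r u) (nabL (outSub (inSub X r) (t ⊓ r)) g) := by
          rw [step8]
end
end

section
/- If F is a regular face for X (at r = {0}), then the function P_X^{F} belongs to F(X), i.e. for every rational subspace r, ∇_{X\r} P_X^{F} is supported on Γ ∩ r; indeed ∇_{X\r} P_X^{F} = P_{X∩r}^{F}. -/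
open Function

attribute [local instance] Classical.propDecidable

noncomputable section

variable {ι : Type*} [Fintype ι]

namespace PFaux

open Function List

set_option linter.unusedSectionVars false

variable {ι : Type*} [Fintype ι]

/-! ### castV and dotR basics -/

def castVHom : ZLat ι →+ Amb ι where
  toFun := castV
  map_zero' := by funext i; simp [castV]
  map_add' x y := by funext i; simp [castV]

lemma castV_smul (k : ℤ) (a : ZLat ι) : castV (k • a) = (k : ℝ) • castV a := by
  funext i
  simp [castV]

lemma castV_neg (a : ZLat ι) : castV (-a) = - castV a := by
  funext i
  simp [castV]

lemma castV_zero : castV (0 : ZLat ι) = 0 := by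
  funext i
  simp [castV]

lemma castV_add (x y : ZLat ι) : castV (x + y) = castV x + castV y := map_add castVHom x y

lemma castV_finsum {n : ℕ} (f : Fin n → ZLat ι) :
    castV (∑ i, f i) = ∑ i, castV (f i) := map_sum castVHom f Finset.univ

lemma castV_eq_zero {a : ZLat ι} (h : castV a = 0) : a = 0 := by
  funext i
  have := congrFun h i
  simpa [castV] using this

lemma dotR_neg (u v : Amb ι) : dotR u (-v) = - dotR u v := by
  simp [dotR]

lemma dotR_rsmul (u : Amb ι) (c : ℝ) (v : Amb ι) : dotR u (c • v) = c * dotR u v := by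
  simp only [dotR, Pi.smul_apply, smul_eq_mul, Finset.mul_sum]
  exact Finset.sum_congr rfl fun i _ => by ring

lemma dotR_sum (u : Amb ι) {n : ℕ} (f : Fin n → Amb ι) :
    dotR u (∑ i, f i) = ∑ i, dotR u (f i) := by
  simp only [dotR]
  rw [Finset.sum_comm]
  congr 1
  funext i
  simp [Finset.mul_sum]

/-! ### Solution sets of partition problems -/

def Sol (Y : List (ZLat ι)) (γ : ZLat ι) : Type _ :=
  {k : Fin Y.length → ℕ // ∑ i, (k i : ℤ) • Y.get i = γ}

lemma partFn_eq (Y : List (ZLat ι)) (γ : ZLat ι) : partFn Y γ = Nat.card (Sol Y γ) := rfl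

def solCongr {Y : List (ZLat ι)} {γ γ' : ZLat ι} (h : γ = γ') : Sol Y γ ≃ Sol Y γ' :=
  Equiv.subtypeEquivRight (fun k => by rw [h])

lemma sum_cons (a : ZLat ι) (t : List (ZLat ι)) (k : Fin (t.length + 1) → ℕ) :
    ∑ i : Fin ((a :: t).length), ((k i : ℤ)) • (a :: t).get i
      = (k 0 : ℤ) • a + ∑ i : Fin t.length, (k i.succ : ℤ) • t.get i := by
  show ∑ i : Fin (t.length + 1), ((k i : ℤ)) • (a :: t).get i = _
  rw [Fin.sum_univ_succ]
  simp

/-- Splitting off the first entry. -/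
def solCons (a : ZLat ι) (t : List (ZLat ι)) (γ : ZLat ι) :
    Sol (a :: t) γ ≃ Σ m : ℕ, Sol t (γ - ((m : ℕ) : ℤ) • a) where
  toFun k := ⟨k.1 (0 : Fin (t.length + 1)), ⟨fun i => k.1 i.succ, by
    have hk := (sum_cons a t k.1).symm.trans k.2
    exact eq_sub_of_add_eq' hk⟩⟩
  invFun s := ⟨(Fin.cons s.1 s.2.1 : Fin (t.length + 1) → ℕ), by
    refine (sum_cons a t (Fin.cons s.1 s.2.1)).trans ?_
    simp only [Fin.cons_zero, Fin.cons_succ]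
    rw [s.2.2]
    abel⟩
  left_inv k := Subtype.ext (by
    show (Fin.cons (k.1 (0 : Fin (t.length + 1))) (fun i => k.1 i.succ) : Fin (t.length + 1) → ℕ) = k.1
    exact Fin.cons_self_tail (α := fun _ => ℕ) k.1)
  right_inv s := by
    obtain ⟨m, k, h⟩ := s
    rfl

def sigmaSwapSol (l : List (ZLat ι)) (γ x y : ZLat ι) :
    (Σ m : ℕ, Σ n : ℕ, Sol l (γ - ((m : ℕ) : ℤ) • y - ((n : ℕ) : ℤ) • x)) ≃
      Σ n : ℕ, Σ m : ℕ, Sol l (γ - ((n : ℕ) : ℤ) • x - ((m : ℕ) : ℤ) • y) where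
  toFun s := ⟨s.2.1, s.1, solCongr (sub_right_comm _ _ _) s.2.2⟩
  invFun s := ⟨s.2.1, s.1, solCongr (sub_right_comm _ _ _) s.2.2⟩
  left_inv s := by obtain ⟨m, n, k⟩ := s; rfl
  right_inv s := by obtain ⟨m, n, k⟩ := s; rfl

lemma sol_perm_equiv {l l' : List (ZLat ι)} (h : l.Perm l') :
    ∀ γ, Nonempty (Sol l γ ≃ Sol l' γ) := by
  induction h with
  | nil => exact fun γ => ⟨Equiv.refl _⟩
  | cons a h ih =>
      intro γ
      exact ⟨(solCons _ _ _).trans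
        ((Equiv.sigmaCongrRight fun m => (ih _).some).trans (solCons _ _ _).symm)⟩
  | swap x y l =>
      intro γ
      exact ⟨(solCons _ _ _).trans
        (((Equiv.sigmaCongrRight fun m => solCons _ _ _).trans
          ((sigmaSwapSol l γ x y).trans
            (Equiv.sigmaCongrRight fun n => (solCons _ _ _).symm))).trans
              (solCons _ _ _).symm)⟩
  | trans h1 h2 ih1 ih2 =>
      intro γ
      exact ⟨(ih1 γ).some.trans (ih2 γ).some⟩

lemma partFn_perm {l l' : List (ZLat ι)} (h : l.Perm l') : partFn l = partFn l' := by
  funext γ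
  rw [partFn_eq, partFn_eq]
  exact congrArg _ (Nat.card_congr (sol_perm_equiv h γ).some)

/-! ### Finiteness -/

lemma sol_finite {u : Amb ι} {Z : List (ZLat ι)} (hZ : ∀ z ∈ Z, 0 < dotR u (castV z))
    (γ : ZLat ι) : Finite (Sol Z γ) := by
  have hfin : (Set.Iic (fun i => ⌈dotR u (castV γ) / dotR u (castV (Z.get i))⌉₊ : Fin Z.length → ℕ)).Finite :=
    Set.finite_Iic _
  have hsub : {k : Fin Z.length → ℕ | ∑ i, ((k i : ℤ)) • Z.get i = γ} ⊆
      Set.Iic (fun i => ⌈dotR u (castV γ) / dotR u (castV (Z.get i))⌉₊ : Fin Z.length → ℕ) := by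
    intro k hk
    rw [Set.mem_setOf_eq] at hk
    rw [Set.mem_Iic, Pi.le_def]
    have key : ∑ i, ((k i : ℝ)) * dotR u (castV (Z.get i)) = dotR u (castV γ) := by
      have h1 : castV (∑ i, ((k i : ℤ)) • Z.get i) = castV γ := by rw [hk]
      rw [castV_finsum] at h1
      have h2 := congrArg (dotR u) h1
      rw [dotR_sum] at h2
      rw [← h2]
      refine Finset.sum_congr rfl fun i _ => ?_
      rw [castV_smul, dotR_rsmul]
      push_cast
      ring
    intro i
    have hdi : 0 < dotR u (castV (Z.get i)) := hZ _ (Z.get_mem i)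
    have hle : (k i : ℝ) * dotR u (castV (Z.get i)) ≤ dotR u (castV γ) := by
      rw [← key]
      refine Finset.single_le_sum (f := fun j => ((k j : ℝ)) * dotR u (castV (Z.get j)))
        (fun j _ => ?_) (Finset.mem_univ i)
      exact mul_nonneg (Nat.cast_nonneg _) (hZ _ (Z.get_mem j)).le
    have hkd : (k i : ℝ) ≤ dotR u (castV γ) / dotR u (castV (Z.get i)) := (le_div_iff₀ hdi).2 hle
    calc k i = ⌈((k i : ℕ) : ℝ)⌉₊ := (Nat.ceil_natCast _).symm
      _ ≤ _ := Nat.ceil_le_ceil hkd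
  exact (hfin.subset hsub).to_subtype

/-! ### The recursion -/

lemma partFn_cons_step {u : Amb ι} {a : ZLat ι} {Z : List (ZLat ι)}
    (ha : 0 < dotR u (castV a)) (hZ : ∀ z ∈ Z, 0 < dotR u (castV z)) (γ : ZLat ι) :
    partFn (a :: Z) γ = partFn (a :: Z) (γ - a) + partFn Z γ := by
  have hcons : ∀ z ∈ a :: Z, 0 < dotR u (castV z) := by
    intro z hz
    rcases List.mem_cons.1 hz with h | h
    · subst h; exact ha
    · exact hZ z h
  haveI h1 : Finite (Sol Z γ) := sol_finite hZ γ
  haveI h2 : Finite (Sol (a :: Z) (γ - a)) := sol_finite hcons (γ - a)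
  have e : Sol (a :: Z) γ ≃ Sol Z γ ⊕ Sol (a :: Z) (γ - a) := by
    refine (solCons a Z γ).trans ((Equiv.sigmaNatSucc _).trans (Equiv.sumCongr (solCongr ?_) ?_))
    · simp
    · refine (Equiv.sigmaCongrRight fun m => solCongr ?_).trans (solCons a Z (γ - a)).symm
      push_cast
      rw [add_smul, one_smul]
      abel
  have hc := Nat.card_congr e
  rw [partFn_eq, partFn_eq, partFn_eq, hc, Nat.card_sum]
  push_cast
  ring

/-! ### The function Q -/

def negOf (u : Amb ι) (Y : List (ZLat ι)) : List (ZLat ι) :=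
  Y.filter (fun a => decide (dotR u (castV a) < 0))

def sgnOf (u : Amb ι) (Y : List (ZLat ι)) : List (ZLat ι) :=
  Y.map (fun a => if 0 < dotR u (castV a) then a else -a)

def Q (u : Amb ι) (Y : List (ZLat ι)) : ZLat ι → ℤ :=
  fun γ => (-1) ^ (negOf u Y).length * partFn (sgnOf u Y) (γ + (negOf u Y).sum)

lemma sgnOf_pos {u : Amb ι} {Y : List (ZLat ι)} (hY : ∀ x ∈ Y, dotR u (castV x) ≠ 0) :
    ∀ z ∈ sgnOf u Y, 0 < dotR u (castV z) := by
  intro z hz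
  simp only [sgnOf, List.mem_map] at hz
  obtain ⟨x, hx, rfl⟩ := hz
  by_cases h : 0 < dotR u (castV x)
  · simpa [h] using h
  · have : dotR u (castV x) < 0 := lt_of_le_of_ne (not_lt.1 h) (hY x hx)
    simp only [h, if_false]
    rw [castV_neg, dotR_neg]
    linarith

lemma nab_Q_cons (u : Amb ι) (a : ZLat ι) (Y : List (ZLat ι))
    (ha : dotR u (castV a) ≠ 0) (hY : ∀ x ∈ Y, dotR u (castV x) ≠ 0) :
    nab a (Q u (a :: Y)) = Q u Y := by
  have hsgn := sgnOf_pos hY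
  funext γ
  by_cases hpos : 0 < dotR u (castV a)
  · have h1 : negOf u (a :: Y) = negOf u Y := by
      simp [negOf, List.filter_cons, not_lt.2 hpos.le]
    have h2 : sgnOf u (a :: Y) = a :: sgnOf u Y := by simp [sgnOf, hpos]
    simp only [nab, Q, h1, h2]
    have hstep := partFn_cons_step (u := u) hpos hsgn (γ + (negOf u Y).sum)
    have harg : γ + (negOf u Y).sum - a = γ - a + (negOf u Y).sum := by abel
    rw [hstep, harg]
    ring
  · have hneg : dotR u (castV a) < 0 := lt_of_le_of_ne (not_lt.1 hpos) ha
    have h1 : negOf u (a :: Y) = a :: negOf u Y := by simp [negOf, List.filter_cons, hneg]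
    have h2 : sgnOf u (a :: Y) = (-a) :: sgnOf u Y := by simp [sgnOf, hpos]
    have hpos' : 0 < dotR u (castV (-a)) := by rw [castV_neg, dotR_neg]; linarith
    simp only [nab, Q, h1, h2, List.length_cons, List.sum_cons]
    have hstep := partFn_cons_step (u := u) hpos' hsgn (γ + (negOf u Y).sum)
    rw [sub_neg_eq_add] at hstep
    have e1 : γ - a + (a + (negOf u Y).sum) = γ + (negOf u Y).sum := by abel
    have e2 : γ + (negOf u Y).sum + a = γ + (a + (negOf u Y).sum) := by abel
    rw [e1, hstep, e2, pow_succ]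
    ring

lemma nab_comm (a b : ZLat ι) (f : ZLat ι → ℤ) : nab a (nab b f) = nab b (nab a f) := by
  funext γ
  simp only [nab]
  rw [sub_right_comm γ b a]
  ring

lemma nabL_cons (a : ZLat ι) (Y : List (ZLat ι)) (f : ZLat ι → ℤ) :
    nabL (a :: Y) f = nab a (nabL Y f) := rfl

lemma nabL_nab (Y : List (ZLat ι)) (a : ZLat ι) (f : ZLat ι → ℤ) :
    nabL Y (nab a f) = nab a (nabL Y f) := by
  induction Y with
  | nil => rfl
  | cons b t ih => rw [nabL_cons, nabL_cons, ih, nab_comm]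

lemma nabL_Q_append (u : Amb ι) (W T : List (ZLat ι))
    (h : ∀ x ∈ W ++ T, dotR u (castV x) ≠ 0) :
    nabL W (Q u (W ++ T)) = Q u T := by
  induction W with
  | nil => rfl
  | cons a W ih =>
      have ha : dotR u (castV a) ≠ 0 := h a (by simp)
      have htail : ∀ x ∈ W ++ T, dotR u (castV x) ≠ 0 := fun x hx => h x (by simp [List.mem_append.1 hx])
      calc nabL (a :: W) (Q u (a :: (W ++ T)))
          = nab a (nabL W (Q u (a :: (W ++ T)))) := rfl
        _ = nabL W (nab a (Q u (a :: (W ++ T)))) := (nabL_nab _ _ _).symm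
        _ = nabL W (Q u (W ++ T)) := by rw [nab_Q_cons u a (W ++ T) ha htail]
        _ = Q u T := ih htail

lemma Q_perm (u : Amb ι) {Y Y' : List (ZLat ι)} (h : Y.Perm Y') : Q u Y = Q u Y' := by
  have hneg : (negOf u Y).Perm (negOf u Y') := h.filter _
  have hsgn : (sgnOf u Y).Perm (sgnOf u Y') := h.map _
  funext γ
  simp only [Q, hneg.length_eq, hneg.sum_eq, partFn_perm hsgn]

/-! ### Relating PF and Q -/

lemma outSub_bot {Y : List (ZLat ι)} (h0 : ∀ a ∈ Y, a ≠ 0) : outSub Y (⊥ : Submodule ℝ (Amb ι)) = Y := by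
  unfold outSub
  rw [List.filter_eq_self]
  intro a ha
  simp only [decide_eq_true_eq, Submodule.mem_bot]
  exact fun hc => h0 a ha (castV_eq_zero hc)

lemma PF_eq_Q {Y : List (ZLat ι)} (u : Amb ι) (h0 : ∀ a ∈ Y, a ≠ 0) : PF Y ⊥ u = Q u Y := by
  have h := outSub_bot (Y := Y) h0
  funext γ
  simp only [PF, Q, _root_.negPart, signedOut, negOf, sgnOf, h]

lemma castV_list_sum_mem {r : Submodule ℝ (Amb ι)} {l : List (ZLat ι)}
    (h : ∀ a ∈ l, castV a ∈ r) : castV l.sum ∈ r := by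
  induction l with
  | nil => rw [List.sum_nil, castV_zero]; exact r.zero_mem
  | cons a t ih =>
      rw [List.sum_cons, castV_add]
      exact r.add_mem (h a (by simp)) (ih fun b hb => h b (by simp [hb]))

lemma Q_support {u : Amb ι} {W : List (ZLat ι)} {r : Submodule ℝ (Amb ι)}
    (hW : ∀ a ∈ W, castV a ∈ r) : support (Q u W) ⊆ {γ | castV γ ∈ r} := by
  intro γ hγ
  rw [mem_support] at hγ
  have hp : partFn (sgnOf u W) (γ + (negOf u W).sum) ≠ 0 := by
    intro h
    exact hγ (by simp [Q, h])
  rw [partFn_eq] at hp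
  have hne : Nonempty (Sol (sgnOf u W) (γ + (negOf u W).sum)) := by
    by_contra h
    rw [not_nonempty_iff] at h
    exact hp (by simp [Nat.card_of_isEmpty])
  obtain ⟨⟨k, hk⟩⟩ := hne
  have hmemS : ∀ z ∈ sgnOf u W, castV z ∈ r := by
    intro z hz
    simp only [sgnOf, List.mem_map] at hz
    obtain ⟨x, hx, rfl⟩ := hz
    by_cases h : 0 < dotR u (castV x)
    · simpa [h] using hW x hx
    · simp only [h, if_false]
      rw [castV_neg]
      exact r.neg_mem (hW x hx)
  have h1 : castV (γ + (negOf u W).sum) ∈ r := by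
    rw [← hk, castV_finsum]
    refine r.sum_mem fun i _ => ?_
    show castV ((k i : ℤ) • (sgnOf u W).get i) ∈ r
    rw [castV_smul]
    exact r.smul_mem _ (hmemS _ (List.get_mem _ _))
  have h2 : castV ((negOf u W).sum) ∈ r := by
    refine castV_list_sum_mem fun a ha => ?_
    exact hW a (List.mem_of_mem_filter ha)
  have h3 : castV γ = castV (γ + (negOf u W).sum) - castV ((negOf u W).sum) := by
    rw [castV_add]
    abel
  rw [Set.mem_setOf_eq, h3]
  exact r.sub_mem h1 h2

end PFaux

/-- If `F ∋ u` is a regular face for `X` (at `r = {0}`), then `𝓟_X^F ∈ 𝓕(X)`: for every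
rational subspace `r`, `∇_{X\r} 𝓟_X^F` is supported on `Γ ∩ r`; indeed
`∇_{X\r} 𝓟_X^F = 𝓟_{X∩r}^F`. -/
theorem PF_memF {ι : Type*} [Fintype ι] (X : List (ZLat ι))
    (hX0 : ∀ a ∈ X, a ≠ 0) (hspan : spanOf X = ⊤)
    (u : Amb ι) (hu : Reg X ⊥ u) :
    memF X (PF X ⊥ u) ∧
    ∀ r, IsRational X r → nabOut X r (PF X ⊥ u) = PF (inSub X r) ⊥ u := by
  classical
  have hd : ∀ a ∈ X, dotR u (castV a) ≠ 0 := by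
    intro a ha
    refine hu.2 a ha ?_
    rw [Submodule.mem_bot]
    exact fun hc => hX0 a ha (PFaux.castV_eq_zero hc)
  have key : ∀ r : Submodule ℝ (Amb ι), nabOut X r (PF X ⊥ u) = PF (inSub X r) ⊥ u := by
    intro r
    have hin0 : ∀ a ∈ inSub X r, a ≠ 0 := fun a ha => hX0 a (List.mem_of_mem_filter ha)
    rw [PFaux.PF_eq_Q u hX0, PFaux.PF_eq_Q u hin0]
    have hin : inSub X r = X.filter (fun a => !(decide (castV a ∉ r))) := by
      unfold inSub
      refine (List.filter_congr ?_).symm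
      intro a _
      by_cases h : castV a ∈ r <;> simp [h]
    have hperm : (outSub X r ++ inSub X r).Perm X := by
      rw [hin]
      exact List.filter_append_perm (fun a => decide (castV a ∉ r)) X
    show nabL (outSub X r) (PFaux.Q u X) = _
    rw [PFaux.Q_perm u hperm.symm]
    refine PFaux.nabL_Q_append u _ _ ?_
    intro x hx
    exact hd x (hperm.subset hx)
  refine ⟨?_, fun r _ => key r⟩
  intro r hr
  rw [key r, PFaux.PF_eq_Q (Y := inSub X r) u (fun a ha => hX0 a (List.mem_of_mem_filter ha))]
  refine PFaux.Q_support ?_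
  intro a ha
  have h := (List.mem_filter.1 ha).2
  simpa using h
end
end
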